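/- arXiv:math/0605491 — 7 statements merged into one kernel-verified Lean document; each statement's English description precedes it below -/
import Mathlib

section
/- Let (X, ρ) be a metric space and (x_i^n, 1 ≤ i ≤ n, n ≥ 1) ⊆ X a triangular array such that the empirical measures R̂_n = (1/n)∑_{i=1}^n δ_{x_i^n} converge weakly to a probability measure R with support Y. Then for each n there exists a subset B_n ⊆ {x_i^n : 1 ≤ i ≤ n} such that: (1) card(B_n)/n → 1; (2) the normalized empirical measure on B_n converges weakly to R; and (3) sup{ρ(x, Y) : x ∈ B_n} → 0 as n → ∞. -/
open MeasureTheory Filter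

/-- The topological support of a measure: points all of whose neighborhoods have
positive measure. -/
def msupport {X : Type*} [TopologicalSpace X] [MeasurableSpace X] (R : Measure X) : Set X :=
  {a | ∀ U ∈ nhds a, R U ≠ 0}

noncomputable def clampBCF {X : Type*} [MetricSpace X] (c : ℝ) (s : Set X) :
    BoundedContinuousFunction X ℝ :=
  BoundedContinuousFunction.mkOfBound
    ⟨fun y => min 1 (max c 0 * Metric.infDist y s),
      continuous_const.min (continuous_const.mul (Metric.continuous_infDist_pt s))⟩ 1
    (fun z w => by
      have hz0 : (0:ℝ) ≤ max c 0 * Metric.infDist z s :=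
        mul_nonneg (le_max_right _ _) Metric.infDist_nonneg
      have hw0 : (0:ℝ) ≤ max c 0 * Metric.infDist w s :=
        mul_nonneg (le_max_right _ _) Metric.infDist_nonneg
      simp only [ContinuousMap.coe_mk]
      rw [Real.dist_eq, abs_sub_le_iff]
      constructor
      · have h1 := min_le_left (1:ℝ) (max c 0 * Metric.infDist z s)
        have h2 := le_min zero_le_one hw0
        linarith
      · have h1 := min_le_left (1:ℝ) (max c 0 * Metric.infDist w s)
        have h2 := le_min zero_le_one hz0
        linarith)

lemma clampBCF_apply {X : Type*} [MetricSpace X] (c : ℝ) (s : Set X) (y : X) :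
    clampBCF c s y = min 1 (max c 0 * Metric.infDist y s) := rfl

lemma clampBCF_nonneg {X : Type*} [MetricSpace X] (c : ℝ) (s : Set X) (y : X) :
    0 ≤ clampBCF c s y :=
  le_min zero_le_one (mul_nonneg (le_max_right _ _) Metric.infDist_nonneg)

lemma clampBCF_le_one {X : Type*} [MetricSpace X] (c : ℝ) (s : Set X) (y : X) :
    clampBCF c s y ≤ 1 := min_le_left _ _

lemma clampBCF_eq_zero_of_mem_closure {X : Type*} [MetricSpace X] (c : ℝ) {s : Set X} {y : X}
    (hy : y ∈ closure s) : clampBCF c s y = 0 := by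
  rw [clampBCF_apply, Metric.infDist_zero_of_mem_closure hy, mul_zero]
  simp

lemma clampBCF_eq_one {X : Type*} [MetricSpace X] {c : ℝ} (hc : 0 < c) {s : Set X} {y : X}
    (hy : c⁻¹ ≤ Metric.infDist y s) : clampBCF c s y = 1 := by
  rw [clampBCF_apply, max_eq_left hc.le, min_eq_left]
  calc (1:ℝ) = c * c⁻¹ := by rw [mul_inv_cancel₀ hc.ne']
  _ ≤ c * Metric.infDist y s := by exact mul_le_mul_of_nonneg_left hy hc.le

/-- Decomposition of a triangular array whose empirical measures converge weakly to `R`: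
there are index sets `B n` of the bulk points such that `card (B n) / n → 1`, the empirical
measure on `B n` still converges weakly to `R`, and all points of `B n` are uniformly close
to the support of `R` asymptotically. -/
theorem bulk_decomposition {X : Type*} [MetricSpace X] [MeasurableSpace X] [BorelSpace X]
    (x : ℕ → ℕ → X) (R : Measure X) [IsProbabilityMeasure R]
    (hweak : ∀ f : BoundedContinuousFunction X ℝ,
      Tendsto (fun n : ℕ => (n : ℝ)⁻¹ * ∑ i ∈ Finset.range n, f (x n i)) atTop
        (nhds (∫ a, f a ∂ R))) :
    ∃ B : ℕ → Finset ℕ,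
      (∀ n, B n ⊆ Finset.range n) ∧
      Tendsto (fun n => ((B n).card : ℝ) / n) atTop (nhds 1) ∧
      (∀ f : BoundedContinuousFunction X ℝ,
        Tendsto (fun n => ((B n).card : ℝ)⁻¹ * ∑ i ∈ B n, f (x n i)) atTop
          (nhds (∫ a, f a ∂ R))) ∧
      (∀ ε > 0, ∀ᶠ n in atTop, ∀ i ∈ B n, Metric.infDist (x n i) (msupport R) < ε) := by

  classical
  set Y := msupport R with hY
  set S : Set X := closure (Set.range fun p : ℕ × ℕ => x p.1 p.2) with hSdef
  have hScl : IsClosed S := isClosed_closure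
  have hSne : S.Nonempty := ⟨x 0 0, subset_closure ⟨(0, 0), rfl⟩⟩
  have hmemS : ∀ n i, x n i ∈ S := fun n i => subset_closure ⟨(n, i), rfl⟩
  -- integral of clamp functions of S vanish
  have hintS : ∀ c : ℝ, ∫ a, (clampBCF c S) a ∂ R = 0 := by
    intro c
    have h0 := hweak (clampBCF c S)
    have h1 : (fun n : ℕ => (n : ℝ)⁻¹ * ∑ i ∈ Finset.range n, (clampBCF c S) (x n i))
        = fun _ => (0 : ℝ) := by
      funext n
      rw [Finset.sum_congr rfl fun i _ =>
        clampBCF_eq_zero_of_mem_closure c (subset_closure (hmemS n i))]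
      simp
    rw [h1] at h0
    exact tendsto_nhds_unique h0 tendsto_const_nhds
  -- R Sᶜ = 0
  have hSc : R Sᶜ = 0 := by
    have hsub : Sᶜ ⊆ ⋃ k : ℕ, {y | ((k : ℝ) + 1)⁻¹ < Metric.infDist y S} := by
      intro y hy
      have hpos : 0 < Metric.infDist y S := (hScl.notMem_iff_infDist_pos hSne).1 hy
      obtain ⟨k, hk⟩ := exists_nat_gt (Metric.infDist y S)⁻¹
      refine Set.mem_iUnion.2 ⟨k, ?_⟩
      have h2 : (Metric.infDist y S)⁻¹ < (k : ℝ) + 1 := hk.trans (lt_add_one _)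
      have := inv_strictAnti₀ (inv_pos.2 hpos) h2
      rwa [inv_inv] at this
    refine measure_mono_null hsub (measure_iUnion_null fun k => ?_)
    have hle := Integrable.measure_le_integral ((clampBCF ((k : ℝ) + 1) S).integrable R)
      (Filter.Eventually.of_forall fun y => clampBCF_nonneg _ _ y)
      (s := {y | ((k : ℝ) + 1)⁻¹ < Metric.infDist y S})
      (fun y hy => (clampBCF_eq_one (by positivity) (le_of_lt hy)).ge)
    rw [hintS, ENNReal.ofReal_zero] at hle
    exact le_antisymm hle (zero_le')
  -- null balls around points outside the support
  have hball : ∀ a ∈ Yᶜ, ∃ r > (0:ℝ), R (Metric.ball a r) = 0 := by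
    intro a ha
    have ha' : ¬ ∀ U ∈ nhds a, R U ≠ 0 := ha
    push_neg at ha'
    obtain ⟨U, hU, hU0⟩ := ha'
    obtain ⟨r, hr, hrU⟩ := Metric.mem_nhds_iff.1 hU
    exact ⟨r, hr, measure_mono_null hrU hU0⟩
  -- R (Yᶜ ∩ S) = 0
  have hYS : R (Yᶜ ∩ S) = 0 := by
    obtain ⟨c, hc_count, hc_sub⟩ : TopologicalSpace.IsSeparable S :=
      ((Set.countable_range _).isSeparable).closure
    set N : X → ℚ → Set X := fun d q =>
      if R (Metric.ball d (q : ℝ)) = 0 then Metric.ball d (q : ℝ) else ∅ with hNdef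
    have hNnull : ∀ d q, R (N d q) = 0 := by
      intro d q; rw [hNdef]; dsimp only; split_ifs with h; exacts [h, measure_empty]
    have hcover : (Yᶜ ∩ S) ⊆ ⋃ d ∈ c, ⋃ q : ℚ, N d q := by
      rintro a ⟨haY, haS⟩
      obtain ⟨r, hr, hr0⟩ := hball a haY
      obtain ⟨d, hdc, hd⟩ := Metric.mem_closure_iff.1 (hc_sub haS) (r/3) (by linarith)
      obtain ⟨q, hq1, hq2⟩ := exists_rat_btwn (show r/3 < 2*r/3 by linarith)
      have hnull : R (Metric.ball d (q : ℝ)) = 0 := by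
        refine measure_mono_null (fun y hy => ?_) hr0
        rw [Metric.mem_ball] at hy ⊢
        have h3 := dist_triangle y d a
        have hda : dist d a < r/3 := by rw [dist_comm]; exact hd
        linarith
      refine Set.mem_iUnion₂.2 ⟨d, hdc, Set.mem_iUnion.2 ⟨q, ?_⟩⟩
      rw [hNdef]; dsimp only; rw [if_pos hnull, Metric.mem_ball]
      exact hd.trans hq1
    exact measure_mono_null hcover ((measure_biUnion_null_iff hc_count).2
      fun d _ => measure_iUnion_null_iff.2 fun q => hNnull d q)
  -- R Yᶜ = 0
  have hYc0 : R Yᶜ = 0 := by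
    have hsub : Yᶜ ⊆ (Yᶜ ∩ S) ∪ Sᶜ := fun y hy => by
      by_cases h : y ∈ S
      exacts [Or.inl ⟨hy, h⟩, Or.inr h]
    exact measure_mono_null hsub (measure_union_null hYS hSc)
  -- the fraction of points ε-far from Y tends to zero
  have key : ∀ m : ℕ, Tendsto (fun n : ℕ => (n : ℝ)⁻¹ *
      (((Finset.range n).filter
        (fun i => ((m : ℝ) + 1)⁻¹ ≤ Metric.infDist (x n i) Y)).card : ℝ)) atTop (nhds 0) := by
    intro m
    set g := clampBCF ((m : ℝ) + 1) Y with hgdef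
    have hint : ∫ a, g a ∂ R = 0 := by
      have h1 : ENNReal.ofReal (∫ a, g a ∂ R) ≤ R Yᶜ := by
        apply integral_le_measure (fun y _ => clampBCF_le_one _ _ y)
        intro y hy
        rw [compl_compl] at hy
        exact le_of_eq (clampBCF_eq_zero_of_mem_closure _ (subset_closure hy))
      rw [hYc0] at h1
      have h2 : 0 ≤ ∫ a, g a ∂ R := integral_nonneg fun y => clampBCF_nonneg _ _ y
      have h3 := ENNReal.ofReal_eq_zero.1 (le_antisymm h1 (zero_le'))
      linarith
    have hg0 := hweak g
    rw [hint] at hg0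
    refine tendsto_of_tendsto_of_tendsto_of_le_of_le tendsto_const_nhds hg0
      (fun n => by dsimp only; positivity) (fun n => ?_)
    refine mul_le_mul_of_nonneg_left ?_ (by positivity)
    calc (((Finset.range n).filter
          (fun i => ((m : ℝ) + 1)⁻¹ ≤ Metric.infDist (x n i) Y)).card : ℝ)
        = ∑ _i ∈ (Finset.range n).filter
            (fun i => ((m : ℝ) + 1)⁻¹ ≤ Metric.infDist (x n i) Y), (1 : ℝ) := by simp
      _ ≤ ∑ i ∈ (Finset.range n).filter
            (fun i => ((m : ℝ) + 1)⁻¹ ≤ Metric.infDist (x n i) Y), g (x n i) := by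
          refine Finset.sum_le_sum fun i hi => ?_
          exact (clampBCF_eq_one (by positivity) (Finset.mem_filter.1 hi).2).ge
      _ ≤ ∑ i ∈ Finset.range n, g (x n i) :=
          Finset.sum_le_sum_of_subset_of_nonneg (Finset.filter_subset _ _)
            fun i _ _ => clampBCF_nonneg _ _ _
  -- choose thresholds
  have hchoice : ∀ m : ℕ, ∃ Nm : ℕ, ∀ n ≥ Nm, (n : ℝ)⁻¹ *
      (((Finset.range n).filter
        (fun i => ((m : ℝ) + 1)⁻¹ ≤ Metric.infDist (x n i) Y)).card : ℝ) < ((m : ℝ) + 1)⁻¹ := by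
    intro m
    exact eventually_atTop.1 ((key m).eventually (gt_mem_nhds (by positivity)))
  choose N hN using hchoice
  -- a strictly increasing dominating sequence
  set N' : ℕ → ℕ := fun m => Nat.rec (N 0 + 1) (fun m ih => max (N (m + 1)) ih + 1) m with hN'def
  have hN'succ : ∀ m, N' (m + 1) = max (N (m + 1)) (N' m) + 1 := fun m => rfl
  have hN'mono : StrictMono N' := strictMono_nat_of_lt_succ fun m => by
    rw [hN'succ]; exact lt_of_le_of_lt (le_max_right _ _) (lt_add_one _)
  have hN'geN : ∀ m, N m < N' m := by
    intro m
    cases m with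
    | zero => exact Nat.lt_succ_self _
    | succ m => rw [hN'succ]; exact lt_of_le_of_lt (le_max_left _ _) (lt_add_one _)
  have hN'gt : ∀ m, m < N' m := by
    intro m
    induction m with
    | zero => exact Nat.succ_pos _
    | succ m ih => rw [hN'succ]; have := le_max_right (N (m + 1)) (N' m); omega
  -- the diagonal index
  set mf : ℕ → ℕ := fun n => ((Finset.range n).filter (fun m => N' m ≤ n)).card with hmfdef
  have hmf_iff : ∀ n m, N' m ≤ n ↔ m < mf n := by
    intro n m
    constructor
    · intro h
      have hsub : Finset.range (m + 1) ⊆ (Finset.range n).filter (fun k => N' k ≤ n) := by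
        intro k hk
        rw [Finset.mem_range] at hk
        have hk' : k ≤ m := Nat.lt_succ_iff.1 hk
        refine Finset.mem_filter.2 ⟨Finset.mem_range.2 ?_, le_trans (hN'mono.monotone hk') h⟩
        exact lt_of_le_of_lt hk' (lt_of_lt_of_le (hN'gt m) h)
      have hcard := Finset.card_le_card hsub
      rw [Finset.card_range] at hcard
      exact hcard
    · intro h
      by_contra hcon
      push_neg at hcon
      have hsub : (Finset.range n).filter (fun k => N' k ≤ n) ⊆ Finset.range m := by
        intro k hk
        rw [Finset.mem_range]
        by_contra hk'
        push_neg at hk'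
        have h1 := hN'mono.monotone hk'
        have h2 := (Finset.mem_filter.1 hk).2
        omega
      have hcard := Finset.card_le_card hsub
      rw [Finset.card_range] at hcard
      have hmfeq : mf n = ((Finset.range n).filter (fun k => N' k ≤ n)).card := rfl
      omega
  have hmf_tendsto : Tendsto mf atTop atTop := by
    refine tendsto_atTop.2 fun b => eventually_atTop.2 ⟨N' b, fun n hn => ?_⟩
    exact le_of_lt ((hmf_iff n b).1 hn)
  -- the bulk sets
  set B : ℕ → Finset ℕ := fun n => if mf n = 0 then Finset.range n else
    (Finset.range n).filter (fun i => Metric.infDist (x n i) Y < ((mf n : ℝ))⁻¹) with hBdef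
  have hBsub : ∀ n, B n ⊆ Finset.range n := by
    intro n; rw [hBdef]; dsimp only; split_ifs
    exacts [subset_rfl, Finset.filter_subset _ _]
  -- quantitative bound on complements
  have hcardbound : ∀ n : ℕ, 0 < mf n →
      (n : ℝ)⁻¹ * (((Finset.range n \ B n).card : ℝ)) < ((mf n : ℝ))⁻¹ := by
    intro n h
    have hm : (mf n - 1) + 1 = mf n := Nat.succ_pred_eq_of_pos h
    set m := mf n - 1 with hmdef
    have hNle : N' m ≤ n := (hmf_iff n m).2 (by omega)
    have hfrac := hN m n (le_of_lt (lt_of_lt_of_le (hN'geN m) hNle))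
    have hcast : ((m : ℝ) + 1) = (mf n : ℝ) := by exact_mod_cast congrArg (Nat.cast : ℕ → ℝ) hm
    have hBn : B n = (Finset.range n).filter
        (fun i => Metric.infDist (x n i) Y < ((mf n : ℝ))⁻¹) := by
      rw [hBdef]; dsimp only; rw [if_neg (by omega)]
    have hset : Finset.range n \ B n = (Finset.range n).filter
        (fun i => ((m : ℝ) + 1)⁻¹ ≤ Metric.infDist (x n i) Y) := by
      rw [hBn]
      ext i
      simp only [Finset.mem_sdiff, Finset.mem_filter, not_and, not_lt, hcast]
      tauto
    rw [hset, ← hcast]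
    exact hfrac
  -- the complement fraction tends to zero
  have hmfinv : Tendsto (fun n => ((mf n : ℝ))⁻¹) atTop (nhds 0) :=
    tendsto_inv_atTop_zero.comp (tendsto_natCast_atTop_atTop.comp hmf_tendsto)
  have hev : ∀ᶠ n in atTop, 0 < mf n ∧ 1 ≤ n := by
    filter_upwards [eventually_ge_atTop (N' 0), eventually_ge_atTop 1] with n h1 h2
    exact ⟨(hmf_iff n 0).1 h1, h2⟩
  have hbadfrac : Tendsto (fun n : ℕ => (((Finset.range n \ B n).card : ℝ)) / n)
      atTop (nhds 0) := by
    refine tendsto_of_tendsto_of_tendsto_of_le_of_le' tendsto_const_nhds hmfinv ?_ ?_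
    · filter_upwards with n; exact div_nonneg (Nat.cast_nonneg _) (Nat.cast_nonneg _)
    · filter_upwards [hev] with n hn
      have h3 := hcardbound n hn.1
      rw [div_eq_inv_mul]
      exact le_of_lt h3
  have hcardB : ∀ n : ℕ, ((B n).card : ℝ) = n - ((Finset.range n \ B n).card : ℝ) := by
    intro n
    have h2 : (B n).card ≤ n := by
      have := Finset.card_le_card (hBsub n); rwa [Finset.card_range] at this
    have h1 : (Finset.range n \ B n).card = n - (B n).card := by
      rw [Finset.card_sdiff_of_subset (hBsub n), Finset.card_range]
    rw [h1, Nat.cast_sub h2]; ring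
  -- condition 2
  have hcond2 : Tendsto (fun n : ℕ => ((B n).card : ℝ) / n) atTop (nhds 1) := by
    have h1 := (tendsto_const_nhds : Tendsto (fun _ : ℕ => (1:ℝ)) atTop (nhds 1)).sub hbadfrac
    rw [sub_zero] at h1
    refine Filter.Tendsto.congr' ?_ h1
    filter_upwards [eventually_ge_atTop 1] with n hn
    have hn0 : (n : ℝ) ≠ 0 := Nat.cast_ne_zero.2 (by omega)
    rw [hcardB n, sub_div, div_self hn0]
  -- condition 3
  have hcond3 : ∀ f : BoundedContinuousFunction X ℝ,
      Tendsto (fun n => ((B n).card : ℝ)⁻¹ * ∑ i ∈ B n, f (x n i)) atTop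
        (nhds (∫ a, f a ∂ R)) := by
    intro f
    have hsplit : ∀ n : ℕ, ∑ i ∈ Finset.range n, f (x n i)
        = ∑ i ∈ Finset.range n \ B n, f (x n i) + ∑ i ∈ B n, f (x n i) :=
      fun n => (Finset.sum_sdiff (hBsub n)).symm
    have hbad0 : Tendsto (fun n : ℕ => (n : ℝ)⁻¹ * ∑ i ∈ Finset.range n \ B n, f (x n i))
        atTop (nhds 0) := by
      apply squeeze_zero_norm'
        (a := fun n : ℕ => (((Finset.range n \ B n).card : ℝ)) / n * ‖f‖)
      · filter_upwards with n
        have h1 : ‖∑ i ∈ Finset.range n \ B n, f (x n i)‖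
            ≤ ((Finset.range n \ B n).card : ℝ) * ‖f‖ := by
          refine (norm_sum_le _ _).trans ?_
          have := Finset.sum_le_card_nsmul (Finset.range n \ B n)
            (fun i => ‖f (x n i)‖) ‖f‖ (fun i _ => f.norm_coe_le_norm _)
          rwa [nsmul_eq_mul] at this
        have h2 : ‖(n : ℝ)⁻¹ * ∑ i ∈ Finset.range n \ B n, f (x n i)‖
            = (n : ℝ)⁻¹ * ‖∑ i ∈ Finset.range n \ B n, f (x n i)‖ := by
          rw [norm_mul, norm_inv, Real.norm_natCast]
        rw [h2]
        calc (n : ℝ)⁻¹ * ‖∑ i ∈ Finset.range n \ B n, f (x n i)‖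
            ≤ (n : ℝ)⁻¹ * (((Finset.range n \ B n).card : ℝ) * ‖f‖) :=
              mul_le_mul_of_nonneg_left h1 (by positivity)
          _ = ((Finset.range n \ B n).card : ℝ) / n * ‖f‖ := by ring
      · simpa using hbadfrac.mul_const ‖f‖
    have h1 : Tendsto (fun n : ℕ => (n : ℝ)⁻¹ * ∑ i ∈ B n, f (x n i)) atTop
        (nhds (∫ a, f a ∂ R)) := by
      have h2 := (hweak f).sub hbad0
      rw [sub_zero] at h2
      refine h2.congr fun n => ?_
      rw [hsplit n]; ring
    have hinv : Tendsto (fun n : ℕ => (((B n).card : ℝ) / n)⁻¹) atTop (nhds 1) := by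
      have := hcond2.inv₀ one_ne_zero
      rwa [inv_one] at this
    have h3 := hinv.mul h1
    rw [one_mul] at h3
    refine Filter.Tendsto.congr' ?_ h3
    have hev2 : ∀ᶠ n : ℕ in atTop, (1:ℝ)/2 < ((B n).card : ℝ)/n :=
      hcond2.eventually (lt_mem_nhds (by norm_num))
    filter_upwards [hev2, eventually_ge_atTop 1] with n hhalf hn
    have hn0 : (n : ℝ) ≠ 0 := Nat.cast_ne_zero.2 (by omega)
    have hc0 : ((B n).card : ℝ) ≠ 0 := by
      intro h; rw [h, zero_div] at hhalf; norm_num at hhalf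
    field_simp
  -- condition 4
  have hcond4 : ∀ ε > (0:ℝ), ∀ᶠ n in atTop, ∀ i ∈ B n, Metric.infDist (x n i) Y < ε := by
    intro ε hε
    obtain ⟨M, hM⟩ := exists_nat_gt ε⁻¹
    have hMpos : (0:ℝ) < M := lt_trans (inv_pos.2 hε) hM
    have hM1 : 0 < M := by exact_mod_cast hMpos
    have hMε : ((M : ℝ))⁻¹ < ε := by
      have := inv_strictAnti₀ (inv_pos.2 hε) hM
      rwa [inv_inv] at this
    filter_upwards [hmf_tendsto.eventually (eventually_ge_atTop M)] with n hn i hi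
    have hmf0 : 0 < mf n := lt_of_lt_of_le hM1 hn
    rw [hBdef] at hi; dsimp only at hi; rw [if_neg (by omega)] at hi
    have h1 := (Finset.mem_filter.1 hi).2
    have h2 : ((mf n : ℝ))⁻¹ ≤ ((M : ℝ))⁻¹ := by
      apply inv_anti₀ hMpos
      exact_mod_cast hn
    exact (lt_of_lt_of_le h1 h2).trans hMε
  exact ⟨B, hBsub, hcond2, hcond3, hcond4⟩
end

section
/- Let Z be ℝ^d-valued with E exp(α|Z|) < ∞ for some α > 0, let (Z_i) be i.i.d. copies, let C_n ⊆ X with card(C_n)/n → 0, and let f: X → ℝ^{m×d} be such that {f(x) : x ∈ C_n, n ≥ 1} is bounded by a constant M. Then π_n = (1/n) ∑_{x_i^n ∈ C_n} f(x_i^n)·Z_i converges to 0 in probability; more precisely, for every δ > 0, limsup_n (1/n) log P(|π_n| > δ) ≤ −κδ/M' for suitable constants, and in particular P(|π_n| > δ) → 0. -/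
open MeasureTheory Filter
open scoped ENNReal

noncomputable section

/-- Large deviation bounds along the speed sequence `φ n` for the random variables
`W (φ n)`, with rate function `I` taking values in `[0, ∞]`. -/
def LDPAlong {Ω E : Type*} [MeasurableSpace Ω] [TopologicalSpace E]
    (μ : Measure Ω) (φ : ℕ → ℕ) (W : ℕ → Ω → E) (I : E → ℝ≥0∞) : Prop :=
  (∀ F : Set E, IsClosed F →
      Filter.limsup
        (fun n => (((φ n : ℝ))⁻¹ : EReal) * ENNReal.log (μ {ω | W (φ n) ω ∈ F}))
        Filter.atTop ≤ -(⨅ x ∈ F, (I x : EReal))) ∧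
  (∀ G : Set E, IsOpen G →
      -(⨅ x ∈ G, (I x : EReal)) ≤
      Filter.liminf
        (fun n => (((φ n : ℝ))⁻¹ : EReal) * ENNReal.log (μ {ω | W (φ n) ω ∈ G}))
        Filter.atTop)

/-- The large deviation principle at speed `n` for the sequence `W n`. -/
def LDP {Ω E : Type*} [MeasurableSpace Ω] [TopologicalSpace E]
    (μ : Measure Ω) (W : ℕ → Ω → E) (I : E → ℝ≥0∞) : Prop :=
  LDPAlong μ id W I

/-- A good rate function: lower semicontinuous with compact sublevel sets. -/
def GoodRate {E : Type*} [TopologicalSpace E] (I : E → ℝ≥0∞) : Prop :=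
  LowerSemicontinuous I ∧ ∀ c : ℝ≥0∞, c ≠ ⊤ → IsCompact {x | I x ≤ c}

lemma norm_mulVec_le' {m d : ℕ} (A : Fin m → Fin d → ℝ) (v : Fin d → ℝ) :
    ‖Matrix.mulVec A v‖ ≤ (d : ℝ) * ‖A‖ * ‖v‖ := by
  rw [pi_norm_le_iff_of_nonneg (by positivity)]
  intro j
  calc ‖Matrix.mulVec A v j‖ = |∑ k, A j k * v k| := by
        simp [Matrix.mulVec, dotProduct, Real.norm_eq_abs]
    _ ≤ ∑ k, |A j k * v k| := Finset.abs_sum_le_sum_abs _ _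
    _ ≤ ∑ _k : Fin d, ‖A‖ * ‖v‖ := by
        refine Finset.sum_le_sum fun k _ => ?_
        rw [abs_mul]
        have h1 : |A j k| ≤ ‖A‖ := by
          calc |A j k| = ‖A j k‖ := (Real.norm_eq_abs _).symm
            _ ≤ ‖A j‖ := norm_le_pi_norm _ _
            _ ≤ ‖A‖ := norm_le_pi_norm _ _
        have h2 : |v k| ≤ ‖v‖ := by
          calc |v k| = ‖v k‖ := (Real.norm_eq_abs _).symm
            _ ≤ ‖v‖ := norm_le_pi_norm _ _
        exact mul_le_mul h1 h2 (abs_nonneg _) (norm_nonneg _)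
    _ = (d : ℝ) * ‖A‖ * ‖v‖ := by
        simp [Finset.sum_const, Finset.card_univ, mul_assoc]

/-- If `(Z i)` are i.i.d. with an exponential moment, `card (C n) / n → 0`, and the matrix
weights are bounded by `M`, then `π n = (1/n) ∑_{i ∈ C n} a n i · Z i` satisfies a Chernoff
bound `limsup (1/n) log P(|π n| > δ) ≤ -cδ` for some `c > 0`, and in particular
`π n → 0` in probability. -/
theorem partial_mean_negligible {Ω : Type*} [MeasurableSpace Ω] (μ : Measure Ω)
    [IsProbabilityMeasure μ] {d m : ℕ} (Z : ℕ → Ω → (Fin d → ℝ))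
    (hmeas : ∀ i, Measurable (Z i))
    (hindep : ProbabilityTheory.iIndepFun Z μ)
    (hident : ∀ i, μ.map (Z i) = μ.map (Z 0))
    (hexp : ∃ α > 0, Integrable (fun ω => Real.exp (α * ‖Z 0 ω‖)) μ)
    (C : ℕ → Finset ℕ) (hCn : ∀ n, C n ⊆ Finset.range n)
    (hC : Tendsto (fun n : ℕ => ((C n).card : ℝ) / n) atTop (nhds 0))
    (a : ℕ → ℕ → (Fin m → Fin d → ℝ)) (M : ℝ)
    (ha : ∀ n, ∀ i ∈ C n, ‖a n i‖ ≤ M) :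
    ∀ δ > (0 : ℝ),
      (∃ c > (0 : ℝ),
        Filter.limsup
          (fun n : ℕ => (((n : ℝ))⁻¹ : EReal) * ENNReal.log
            (μ {ω | δ < ‖(n : ℝ)⁻¹ • ∑ i ∈ C n, Matrix.mulVec (a n i) (Z i ω)‖}))
          atTop ≤ ((-(c * δ) : ℝ) : EReal)) ∧
      Tendsto
        (fun n : ℕ => μ {ω | δ < ‖(n : ℝ)⁻¹ • ∑ i ∈ C n, Matrix.mulVec (a n i) (Z i ω)‖})
        atTop (nhds 0) := by
  obtain ⟨α, hα, hint0⟩ := hexp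
  intro δ hδ
  classical
  set M' : ℝ := max M 1 with hM'def
  have hM' : 0 < M' := lt_of_lt_of_le one_pos (le_max_right _ _)
  set D : ℝ := (d : ℝ) + 1 with hDdef
  have hD : 0 < D := by positivity
  have hDM : 0 < D * M' := mul_pos hD hM'
  set c : ℝ := α / (D * M') with hcdef
  have hc : 0 < c := div_pos hα hDM
  set X : ℕ → Ω → ℝ := fun i ω => ‖Z i ω‖ with hXdef
  have hXm : ∀ i, Measurable (X i) := fun i => (hmeas i).norm
  have hXindep : ProbabilityTheory.iIndepFun X μ :=
    hindep.comp (fun _ x => ‖x‖) (fun _ => measurable_norm)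
  have hgm : Measurable (fun x : Fin d → ℝ => Real.exp (α * ‖x‖)) :=
    (measurable_norm.const_mul α).exp
  have hXint : ∀ i, Integrable (fun ω => Real.exp (α * X i ω)) μ := by
    intro i
    have h1 : Integrable ((fun x : Fin d → ℝ => Real.exp (α * ‖x‖)) ∘ (Z i)) μ := by
      rw [← integrable_map_measure hgm.aestronglyMeasurable (hmeas i).aemeasurable, hident i,
        integrable_map_measure hgm.aestronglyMeasurable (hmeas 0).aemeasurable]
      exact hint0
    exact h1
  set K : ℝ := ProbabilityTheory.mgf (X 0) μ α with hKdef
  have hK : 0 < K := ProbabilityTheory.mgf_pos (hXint 0)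
  have hmgf : ∀ i, ProbabilityTheory.mgf (X i) μ α = K := by
    intro i
    rw [hKdef]
    show ∫ ω, Real.exp (α * ‖Z i ω‖) ∂μ = ∫ ω, Real.exp (α * ‖Z 0 ω‖) ∂μ
    rw [← MeasureTheory.integral_map (hmeas i).aemeasurable hgm.aestronglyMeasurable
        (f := fun x => Real.exp (α * ‖x‖)),
      hident i, MeasureTheory.integral_map (hmeas 0).aemeasurable hgm.aestronglyMeasurable]
  set b : ℕ → ℝ := fun n => -(c * δ) + ((C n).card : ℝ) / n * Real.log K with hbdef
  have hbound : ∀ n : ℕ, 1 ≤ n →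
      μ {ω | δ < ‖(n : ℝ)⁻¹ • ∑ i ∈ C n, Matrix.mulVec (a n i) (Z i ω)‖}
        ≤ ENNReal.ofReal (Real.exp (n * b n)) := by
    intro n hn
    have hn0 : (0 : ℝ) < n := by exact_mod_cast hn
    set ε : ℝ := n * δ / (D * M') with hεdef
    have hsub : {ω | δ < ‖(n : ℝ)⁻¹ • ∑ i ∈ C n, Matrix.mulVec (a n i) (Z i ω)‖}
        ⊆ {ω | ε ≤ (∑ i ∈ C n, X i) ω} := by
      intro ω hω
      simp only [Set.mem_setOf_eq] at hω ⊢
      have h1 : ‖(n : ℝ)⁻¹ • ∑ i ∈ C n, Matrix.mulVec (a n i) (Z i ω)‖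
          = (n : ℝ)⁻¹ * ‖∑ i ∈ C n, Matrix.mulVec (a n i) (Z i ω)‖ := by
        rw [norm_smul, Real.norm_eq_abs, abs_of_nonneg (by positivity)]
      have h2 : ‖∑ i ∈ C n, Matrix.mulVec (a n i) (Z i ω)‖
          ≤ D * M' * (∑ i ∈ C n, X i) ω := by
        calc ‖∑ i ∈ C n, Matrix.mulVec (a n i) (Z i ω)‖
            ≤ ∑ i ∈ C n, ‖Matrix.mulVec (a n i) (Z i ω)‖ := norm_sum_le _ _
          _ ≤ ∑ i ∈ C n, D * M' * X i ω := by
              refine Finset.sum_le_sum fun i hi => ?_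
              calc ‖Matrix.mulVec (a n i) (Z i ω)‖
                  ≤ (d : ℝ) * ‖a n i‖ * ‖Z i ω‖ := norm_mulVec_le' _ _
                _ ≤ D * M' * ‖Z i ω‖ := by
                    refine mul_le_mul_of_nonneg_right ?_ (norm_nonneg _)
                    refine mul_le_mul ?_ (le_trans (ha n i hi) (le_max_left M 1))
                      (norm_nonneg _) hD.le
                    rw [hDdef]; linarith
          _ = D * M' * (∑ i ∈ C n, X i) ω := by
              rw [Finset.sum_apply, Finset.mul_sum]
      have h3 : δ < (n : ℝ)⁻¹ * (D * M' * (∑ i ∈ C n, X i) ω) := by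
        rw [h1] at hω
        exact lt_of_lt_of_le hω (mul_le_mul_of_nonneg_left h2 (by positivity))
      have h4 : (n : ℝ) * δ < D * M' * (∑ i ∈ C n, X i) ω := by
        have := mul_lt_mul_of_pos_left h3 hn0
        rwa [← mul_assoc, mul_inv_cancel₀ hn0.ne', one_mul] at this
      exact le_of_lt ((div_lt_iff₀ hDM).mpr (h4.trans_eq (mul_comm _ _)))
    have hTint : Integrable (fun ω => Real.exp (α * (∑ i ∈ C n, X i) ω)) μ :=
      hXindep.integrable_exp_mul_sum hXm (fun i _ => hXint i)
    have hcher := ProbabilityTheory.measure_ge_le_exp_mul_mgf (X := ∑ i ∈ C n, X i)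
      (μ := μ) ε hα.le hTint
    have hmgfT : ProbabilityTheory.mgf (∑ i ∈ C n, X i) μ α = K ^ (C n).card := by
      rw [hXindep.mgf_sum hXm]
      rw [Finset.prod_congr rfl (fun i _ => hmgf i), Finset.prod_const]
    have heq : Real.exp (-α * ε) * K ^ (C n).card = Real.exp (n * b n) := by
      rw [← Real.exp_log (pow_pos hK _), ← Real.exp_add, Real.log_pow]
      congr 1
      rw [hεdef, hbdef, hcdef]
      field_simp
    calc μ {ω | δ < ‖(n : ℝ)⁻¹ • ∑ i ∈ C n, Matrix.mulVec (a n i) (Z i ω)‖}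
        ≤ μ {ω | ε ≤ (∑ i ∈ C n, X i) ω} := measure_mono hsub
      _ = ENNReal.ofReal ((μ {ω | ε ≤ (∑ i ∈ C n, X i) ω}).toReal) :=
          (ENNReal.ofReal_toReal (measure_ne_top μ _)).symm
      _ ≤ ENNReal.ofReal (Real.exp (n * b n)) := by
          refine ENNReal.ofReal_le_ofReal ?_
          rw [← heq, ← hmgfT]
          exact hcher
  have hblim : Tendsto b atTop (nhds (-(c * δ))) := by
    have h1 : Tendsto (fun n : ℕ => ((C n).card : ℝ) / n * Real.log K) atTop (nhds 0) := by
      simpa using hC.mul_const (Real.log K)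
    have h2 := (tendsto_const_nhds (x := -(c * δ)) (f := atTop)).add h1
    simpa using h2
  have hkey : ∀ᶠ n : ℕ in atTop,
      (((n : ℝ))⁻¹ : EReal) * ENNReal.log
        (μ {ω | δ < ‖(n : ℝ)⁻¹ • ∑ i ∈ C n, Matrix.mulVec (a n i) (Z i ω)‖})
      ≤ ((b n : ℝ) : EReal) := by
    filter_upwards [eventually_ge_atTop 1] with n hn
    have hn0 : (0 : ℝ) < n := by exact_mod_cast hn
    have h1 : ENNReal.log
        (μ {ω | δ < ‖(n : ℝ)⁻¹ • ∑ i ∈ C n, Matrix.mulVec (a n i) (Z i ω)‖})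
        ≤ ((n * b n : ℝ) : EReal) := by
      calc ENNReal.log (μ _) ≤ ENNReal.log (ENNReal.ofReal (Real.exp (n * b n))) :=
            ENNReal.log_monotone (hbound n hn)
        _ = ((Real.log (Real.exp (n * b n)) : ℝ) : EReal) :=
            ENNReal.log_ofReal_of_pos (Real.exp_pos _)
        _ = ((n * b n : ℝ) : EReal) := by rw [Real.log_exp]
    rw [← EReal.coe_inv]
    calc (((n : ℝ)⁻¹ : ℝ) : EReal) * ENNReal.log (μ _)
        ≤ (((n : ℝ)⁻¹ : ℝ) : EReal) * ((n * b n : ℝ) : EReal) :=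
          mul_le_mul_of_nonneg_left h1 (by exact_mod_cast inv_nonneg.mpr hn0.le)
      _ = ((b n : ℝ) : EReal) := by
          rw [← EReal.coe_mul]
          norm_cast
          field_simp
  refine ⟨⟨c, hc, ?_⟩, ?_⟩
  · calc Filter.limsup _ atTop ≤ Filter.limsup (fun n : ℕ => ((b n : ℝ) : EReal)) atTop :=
        Filter.limsup_le_limsup hkey
      _ = ((-(c * δ) : ℝ) : EReal) := (EReal.tendsto_coe.mpr hblim).limsup_eq
  · have hev2 : ∀ᶠ n : ℕ in atTop, b n ≤ -(c * δ) / 2 :=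
      hblim.eventually_le_const (by nlinarith [mul_pos hc hδ])
    have hub : ∀ᶠ n : ℕ in atTop,
        μ {ω | δ < ‖(n : ℝ)⁻¹ • ∑ i ∈ C n, Matrix.mulVec (a n i) (Z i ω)‖}
          ≤ ENNReal.ofReal (Real.exp ((n : ℝ) * (-(c * δ) / 2))) := by
      filter_upwards [hev2, eventually_ge_atTop 1] with n hb1 hn
      refine (hbound n hn).trans (ENNReal.ofReal_le_ofReal (Real.exp_le_exp.mpr ?_))
      exact mul_le_mul_of_nonneg_left hb1 (Nat.cast_nonneg n)
    have hto : Tendsto (fun n : ℕ => ENNReal.ofReal (Real.exp ((n : ℝ) * (-(c * δ) / 2))))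
        atTop (nhds 0) := by
      rw [← ENNReal.ofReal_zero]
      apply ENNReal.tendsto_ofReal
      have hr : -(c * δ) / 2 < 0 := by nlinarith [mul_pos hc hδ]
      exact Real.tendsto_exp_atBot.comp
        (tendsto_natCast_atTop_atTop.atTop_mul_const_of_neg hr)
    exact tendsto_of_tendsto_of_tendsto_of_le_of_le' tendsto_const_nhds hto
      (Filter.Eventually.of_forall fun n => zero_le) hub
end
end

section
/- If Z satisfies E exp(α|Z|) < ∞ for every α > 0 (all exponential moments), and card(C_n)/n → 0, with f bounded on ∪_n C_n, then π_n = (1/n)∑_{x_i^n∈C_n} f(x_i^n)·Z_i is superexponentially negligible: limsup_n (1/n) log P(|π_n| > δ) = −∞ for every δ > 0. -/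
open MeasureTheory Filter
open scoped ENNReal

noncomputable section

/-- If `Z` has all exponential moments, `card (C n) / n → 0` and the weights are bounded,
then `π n = (1/n) ∑_{i ∈ C n} a n i · Z i` is superexponentially negligible:
`limsup (1/n) log P(|π n| > δ) = -∞` for every `δ > 0`. -/
theorem partial_mean_superexp_negligible {Ω : Type*} [MeasurableSpace Ω] (μ : Measure Ω)
    [IsProbabilityMeasure μ] {d m : ℕ} (Z : ℕ → Ω → (Fin d → ℝ))
    (hmeas : ∀ i, Measurable (Z i))
    (hindep : ProbabilityTheory.iIndepFun Z μ)
    (hident : ∀ i, μ.map (Z i) = μ.map (Z 0))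
    (hexp : ∀ α > (0 : ℝ), Integrable (fun ω => Real.exp (α * ‖Z 0 ω‖)) μ)
    (C : ℕ → Finset ℕ) (hCn : ∀ n, C n ⊆ Finset.range n)
    (hC : Tendsto (fun n : ℕ => ((C n).card : ℝ) / n) atTop (nhds 0))
    (a : ℕ → ℕ → (Fin m → Fin d → ℝ)) (M : ℝ)
    (ha : ∀ n, ∀ i ∈ C n, ‖a n i‖ ≤ M) :
    ∀ δ > (0 : ℝ),
      Filter.limsup
        (fun n : ℕ => (((n : ℝ))⁻¹ : EReal) * ENNReal.log
          (μ {ω | δ < ‖(n : ℝ)⁻¹ • ∑ i ∈ C n, Matrix.mulVec (a n i) (Z i ω)‖}))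
        atTop = ⊥ := by
  intro δ hδ
  set B : ℝ := d * max M 0 + 1 with hBdef
  have hB0 : 0 < B := by positivity
  -- bound on each summand
  have hmv : ∀ n, ∀ i ∈ C n, ∀ v : Fin d → ℝ, ‖Matrix.mulVec (a n i) v‖ ≤ B * ‖v‖ := by
    intro n i hi v
    have hM : ‖a n i‖ ≤ max M 0 := le_trans (ha n i hi) (le_max_left _ _)
    have : ∀ j, ‖Matrix.mulVec (a n i) v j‖ ≤ B * ‖v‖ := by
      intro j
      have h1 : ‖Matrix.mulVec (a n i) v j‖ ≤ ∑ k, ‖a n i j k‖ * ‖v k‖ := by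
        simpa [Matrix.mulVec, dotProduct, Real.norm_eq_abs, abs_mul]
          using Finset.abs_sum_le_sum_abs (fun k => a n i j k * v k) Finset.univ
      have h2 : ∑ k, ‖a n i j k‖ * ‖v k‖ ≤ ∑ _k : Fin d, (max M 0) * ‖v‖ := by
        apply Finset.sum_le_sum
        intro k _
        apply mul_le_mul _ (norm_le_pi_norm v k) (norm_nonneg _) (le_max_right _ _)
        exact le_trans (norm_le_pi_norm (a n i j) k) (le_trans (norm_le_pi_norm (a n i) j) hM)
      have h3 : (∑ _k : Fin d, (max M 0) * ‖v‖) = d * (max M 0) * ‖v‖ := by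
        simp [Finset.sum_const]; ring
      calc ‖Matrix.mulVec (a n i) v j‖ ≤ d * (max M 0) * ‖v‖ := by linarith
        _ ≤ B * ‖v‖ := by
            apply mul_le_mul_of_nonneg_right _ (norm_nonneg v)
            simp only [hBdef]; linarith
    exact pi_norm_le_iff_of_nonneg (by positivity) |>.2 this
  -- the key estimate for each κ > 0
  have key : ∀ κ : ℝ, 0 < κ →
      Filter.limsup
        (fun n : ℕ => (((n : ℝ))⁻¹ : EReal) * ENNReal.log
          (μ {ω | δ < ‖(n : ℝ)⁻¹ • ∑ i ∈ C n, Matrix.mulVec (a n i) (Z i ω)‖}))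
        atTop ≤ ((-(κ * δ / B) : ℝ) : EReal) := by
    intro κ hκ
    set φ : (Fin d → ℝ) → ℝ≥0∞ := fun v => ENNReal.ofReal (Real.exp (κ * ‖v‖)) with hφdef
    have hφm : Measurable φ := by fun_prop
    set g : ℕ → Ω → ℝ≥0∞ := fun i ω => φ (Z i ω) with hgdef
    have hgm : ∀ i, Measurable (g i) := fun i => hφm.comp (hmeas i)
    have hgindep : ProbabilityTheory.iIndepFun g μ :=
      hindep.comp (fun _ => φ) (fun _ => hφm)
    set L : ℝ≥0∞ := ∫⁻ ω, g 0 ω ∂μ with hLdef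
    have hLi : ∀ i, ∫⁻ ω, g i ω ∂μ = L := by
      intro i
      rw [hLdef, hgdef]
      simp only
      rw [← lintegral_map hφm (hmeas i), hident i, lintegral_map hφm (hmeas 0)]
    have hLtop : L ≠ ⊤ := by
      have := (hexp κ hκ).lintegral_lt_top
      simpa [hLdef, hgdef, hφdef] using this.ne
    have hL1 : 1 ≤ L := by
      have : (1 : ℝ≥0∞) = ∫⁻ _, 1 ∂μ := by simp
      rw [this, hLdef]
      apply lintegral_mono
      intro ω
      simp only [hgdef, hφdef]
      exact ENNReal.one_le_ofReal.2 (Real.one_le_exp (by positivity))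
    have hL0 : L ≠ 0 := by
      intro h; rw [h] at hL1; simp at hL1
    set lR : ℝ := Real.log L.toReal with hlRdef
    have hlog : ENNReal.log L = (lR : EReal) := ENNReal.log_pos_real hL0 hLtop
    -- product of lintegrals
    have prodInt : ∀ s : Finset ℕ, ∫⁻ ω, ∏ i ∈ s, g i ω ∂μ = ∏ i ∈ s, ∫⁻ ω, g i ω ∂μ := by
      intro s
      induction s using Finset.induction_on with
      | empty => simp
      | @insert j s hj ih =>
        simp only [Finset.prod_insert hj]
        have hindepfun : ProbabilityTheory.IndepFun (g j) (fun ω => ∏ i ∈ s, g i ω) μ := by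
          have := (hgindep.indepFun_finset_prod_of_notMem hgm hj).symm
          simpa [Finset.prod_fn] using this
        calc ∫⁻ ω, g j ω * ∏ i ∈ s, g i ω ∂μ
            = (∫⁻ ω, g j ω ∂μ) * ∫⁻ ω, ∏ i ∈ s, g i ω ∂μ :=
              ProbabilityTheory.lintegral_mul_eq_lintegral_mul_lintegral_of_indepFun (hgm j)
                (Finset.measurable_prod s (fun i _ => hgm i)) hindepfun
          _ = (∫⁻ ω, g j ω ∂μ) * ∏ i ∈ s, ∫⁻ ω, g i ω ∂μ := by rw [ih]
    -- main per-n bound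
    have hbound : ∀ n : ℕ, 1 ≤ n →
        μ {ω | δ < ‖(n : ℝ)⁻¹ • ∑ i ∈ C n, Matrix.mulVec (a n i) (Z i ω)‖}
          ≤ (ENNReal.ofReal (Real.exp (κ * (n * δ / B))))⁻¹ * L ^ (C n).card := by
      intro n hn
      have hnpos : (0 : ℝ) < n := by exact_mod_cast (by omega : 0 < n)
      set ε : ℝ≥0∞ := ENNReal.ofReal (Real.exp (κ * (n * δ / B))) with hεdef
      have hsub : {ω | δ < ‖(n : ℝ)⁻¹ • ∑ i ∈ C n, Matrix.mulVec (a n i) (Z i ω)‖}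
          ⊆ {ω | ε ≤ ∏ i ∈ C n, g i ω} := by
        intro ω hω
        simp only [Set.mem_setOf_eq] at hω ⊢
        have h1 : ‖∑ i ∈ C n, Matrix.mulVec (a n i) (Z i ω)‖
            ≤ B * ∑ i ∈ C n, ‖Z i ω‖ := by
          calc ‖∑ i ∈ C n, Matrix.mulVec (a n i) (Z i ω)‖
              ≤ ∑ i ∈ C n, ‖Matrix.mulVec (a n i) (Z i ω)‖ := norm_sum_le _ _
            _ ≤ ∑ i ∈ C n, B * ‖Z i ω‖ :=
                Finset.sum_le_sum (fun i hi => hmv n i hi (Z i ω))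
            _ = B * ∑ i ∈ C n, ‖Z i ω‖ := by rw [Finset.mul_sum]
        have h2 : (n : ℝ) * δ < ‖∑ i ∈ C n, Matrix.mulVec (a n i) (Z i ω)‖ := by
          rw [norm_smul, norm_inv, Real.norm_natCast] at hω
          calc (n : ℝ) * δ < n * ((n:ℝ)⁻¹ * ‖∑ i ∈ C n, Matrix.mulVec (a n i) (Z i ω)‖) := by
                exact (mul_lt_mul_iff_right₀ hnpos).2 hω
            _ = ‖∑ i ∈ C n, Matrix.mulVec (a n i) (Z i ω)‖ := by
                field_simp
        have h3 : (n : ℝ) * δ / B ≤ ∑ i ∈ C n, ‖Z i ω‖ := by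
          rw [div_le_iff₀ hB0]
          calc (n:ℝ) * δ ≤ B * ∑ i ∈ C n, ‖Z i ω‖ := by linarith
            _ = (∑ i ∈ C n, ‖Z i ω‖) * B := mul_comm _ _
        have h4 : ∏ i ∈ C n, g i ω = ENNReal.ofReal (Real.exp (κ * ∑ i ∈ C n, ‖Z i ω‖)) := by
          rw [Finset.mul_sum, Real.exp_sum, ENNReal.ofReal_prod_of_nonneg
            (fun i _ => (Real.exp_pos _).le)]
        rw [h4, hεdef]
        apply ENNReal.ofReal_le_ofReal
        apply Real.exp_le_exp.2
        exact mul_le_mul_of_nonneg_left h3 hκ.le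
      have hmarkov : ε * μ {ω | ε ≤ ∏ i ∈ C n, g i ω} ≤ ∫⁻ ω, ∏ i ∈ C n, g i ω ∂μ :=
        mul_meas_ge_le_lintegral (Finset.measurable_prod (C n) (fun i _ => hgm i)) ε
      have hint : ∫⁻ ω, ∏ i ∈ C n, g i ω ∂μ = L ^ (C n).card := by
        rw [prodInt (C n)]
        rw [Finset.prod_congr rfl (fun i _ => hLi i), Finset.prod_const]
      have hε0 : ε ≠ 0 := by
        simp [hεdef, Real.exp_pos]
      have hεtop : ε ≠ ⊤ := ENNReal.ofReal_ne_top
      calc μ {ω | δ < ‖(n : ℝ)⁻¹ • ∑ i ∈ C n, Matrix.mulVec (a n i) (Z i ω)‖}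
          ≤ μ {ω | ε ≤ ∏ i ∈ C n, g i ω} := measure_mono hsub
        _ = ε⁻¹ * (ε * μ {ω | ε ≤ ∏ i ∈ C n, g i ω}) := by
            rw [← mul_assoc, ENNReal.inv_mul_cancel hε0 hεtop, one_mul]
        _ ≤ ε⁻¹ * (L ^ (C n).card) := by
            apply mul_le_mul_right (le_trans hmarkov hint.le)
    -- real sequence bound
    set r : ℕ → ℝ := fun n => -(κ * δ / B) + (((C n).card : ℝ) / n) * lR with hrdef
    have hev : ∀ᶠ n : ℕ in atTop,
        (((n : ℝ))⁻¹ : EReal) * ENNReal.log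
          (μ {ω | δ < ‖(n : ℝ)⁻¹ • ∑ i ∈ C n, Matrix.mulVec (a n i) (Z i ω)‖})
          ≤ ((r n : ℝ) : EReal) := by
      filter_upwards [eventually_ge_atTop (1:ℕ)] with n hn
      have hnpos : (0 : ℝ) < n := by exact_mod_cast (by omega : 0 < n)
      have h1 : ENNReal.log
          (μ {ω | δ < ‖(n : ℝ)⁻¹ • ∑ i ∈ C n, Matrix.mulVec (a n i) (Z i ω)‖})
          ≤ ((-(κ * (n * δ / B)) + ((C n).card : ℝ) * lR : ℝ) : EReal) := by
        refine le_trans (ENNReal.log_monotone (hbound n hn)) ?_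
        rw [ENNReal.log_mul_add, ENNReal.log_inv, ENNReal.log_pow,
          ENNReal.log_ofReal_of_pos (Real.exp_pos _), Real.log_exp, hlog]
        push_cast
        norm_cast
      calc (((n : ℝ))⁻¹ : EReal) * ENNReal.log
            (μ {ω | δ < ‖(n : ℝ)⁻¹ • ∑ i ∈ C n, Matrix.mulVec (a n i) (Z i ω)‖})
          ≤ (((n : ℝ))⁻¹ : EReal) *
              ((-(κ * (n * δ / B)) + ((C n).card : ℝ) * lR : ℝ) : EReal) :=
            mul_le_mul_of_nonneg_left h1 (EReal.inv_nonneg_of_nonneg (by exact_mod_cast hnpos.le))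
        _ = ((r n : ℝ) : EReal) := by
            rw [← EReal.coe_inv, ← EReal.coe_mul]
            congr 1
            rw [hrdef]
            field_simp
    have hrlim : Tendsto r atTop (nhds (-(κ * δ / B))) := by
      have : Tendsto (fun n : ℕ => (((C n).card : ℝ) / n) * lR) atTop (nhds 0) := by
        simpa using hC.mul_const lR
      have := (tendsto_const_nhds (x := -(κ * δ / B))).add this
      simpa using this
    calc Filter.limsup _ atTop ≤ Filter.limsup (fun n => ((r n : ℝ) : EReal)) atTop :=
          limsup_le_limsup hev
      _ = ((-(κ * δ / B) : ℝ) : EReal) := Tendsto.limsup_eq (EReal.tendsto_coe.2 hrlim)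
  -- conclude
  rw [EReal.eq_bot_iff_forall_lt]
  intro y
  have hκpos : 0 < B * (|y| + 1) / δ := by positivity
  refine lt_of_le_of_lt (key _ hκpos) ?_
  rw [EReal.coe_lt_coe_iff]
  have : B * (|y| + 1) / δ * δ / B = |y| + 1 := by
    field_simp
  rw [this]
  have := neg_abs_le y
  linarith
end
end

section
/- Let X, Y be independent standard Gaussian random variables and Z = (X², Y², XY) ∈ ℝ³. Then (1/n)Z satisfies a large deviation principle on ℝ³ with good rate function I(x,y,z) = x/2 + y/2 if x ≥ 0, y ≥ 0 and z² = xy, and I(x,y,z) = +∞ otherwise. In particular I is not convex (e.g. I(1,1,1) = I(1,1,−1) = 1 but I(1,1,0) = +∞). -/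
open MeasureTheory Filter
open scoped ENNReal

noncomputable section

section LDPAux
open MeasureTheory Filter ProbabilityTheory Real
open scoped ENNReal


lemma ldp_mgf_aux {ε : ℝ} (hε : 0 < ε) :
    ∫⁻ x, ENNReal.ofReal (Real.exp ((1/2 - ε) * x ^ 2)) ∂(gaussianReal 0 1)
      = ENNReal.ofReal ((Real.sqrt (2*Real.pi))⁻¹ * Real.sqrt (Real.pi / ε)) := by
  rw [gaussianReal_of_var_ne_zero 0 one_ne_zero,
    lintegral_withDensity_eq_lintegral_mul _ (measurable_gaussianPDF 0 1)
      (by measurability)]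
  have h1 : ∀ x : ℝ, (gaussianPDF 0 1 x * ENNReal.ofReal (Real.exp ((1/2 - ε) * x ^ 2)))
      = ENNReal.ofReal ((Real.sqrt (2*Real.pi))⁻¹ * Real.exp (-ε * x ^ 2)) := by
    intro x
    rw [gaussianPDF, ← ENNReal.ofReal_mul (gaussianPDFReal_nonneg 0 1 x)]
    congr 1
    simp only [gaussianPDFReal, NNReal.coe_one, mul_one, sub_zero]
    rw [mul_assoc, ← Real.exp_add]
    congr 1
    ring
  simp only [Pi.mul_apply, h1]
  rw [← ofReal_integral_eq_lintegral_ofReal]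
  · congr 1
    rw [MeasureTheory.integral_const_mul, integral_gaussian]
  · exact (integrable_exp_neg_mul_sq hε).const_mul _
  · filter_upwards with x
    positivity


lemma ldp_chernoff {ε : ℝ} (hε : 0 < ε) (hε2 : ε ≤ 1/2) (s : ℝ) :
    ((gaussianReal 0 1).prod (gaussianReal 0 1)) {w : ℝ × ℝ | s ≤ w.1 ^ 2 + w.2 ^ 2}
      ≤ ENNReal.ofReal (Real.exp (-(1/2 - ε) * s)) *
        (ENNReal.ofReal ((Real.sqrt (2*Real.pi))⁻¹ * Real.sqrt (Real.pi / ε))) ^ 2 := by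
  set ν := (gaussianReal 0 1).prod (gaussianReal 0 1)
  have hmeas : MeasurableSet {w : ℝ × ℝ | s ≤ w.1 ^ 2 + w.2 ^ 2} :=
    measurableSet_le measurable_const (by fun_prop)
  have h0 : ν {w : ℝ × ℝ | s ≤ w.1 ^ 2 + w.2 ^ 2}
      ≤ ∫⁻ w : ℝ × ℝ, ENNReal.ofReal (Real.exp (-(1/2 - ε) * s)) *
        (ENNReal.ofReal (Real.exp ((1/2 - ε) * w.1 ^ 2)) *
         ENNReal.ofReal (Real.exp ((1/2 - ε) * w.2 ^ 2))) ∂ν := by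
    rw [← lintegral_indicator_one hmeas]
    refine lintegral_mono fun w => ?_
    rw [Set.indicator_apply]
    split_ifs with hw
    · rw [← ENNReal.ofReal_mul (by positivity), ← ENNReal.ofReal_mul (by positivity),
        ← Real.exp_add, ← Real.exp_add]
      simp only [Pi.one_apply]
      rw [show (1:ℝ≥0∞) = ENNReal.ofReal (Real.exp 0) by simp]
      refine ENNReal.ofReal_le_ofReal (Real.exp_le_exp.2 ?_)
      have hw' : s ≤ w.1 ^ 2 + w.2 ^ 2 := hw
      nlinarith [hw']
    · positivity
  refine h0.trans ?_
  rw [lintegral_const_mul' _ _ ENNReal.ofReal_ne_top]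
  refine mul_le_mul_right ?_ _
  have hfm : AEMeasurable (fun x : ℝ => ENNReal.ofReal (Real.exp ((1/2 - ε) * x ^ 2)))
      (gaussianReal 0 1) := by fun_prop
  have := MeasureTheory.lintegral_prod_mul (μ := gaussianReal 0 1) (ν := gaussianReal 0 1)
    (f := fun x : ℝ => ENNReal.ofReal (Real.exp ((1/2 - ε) * x ^ 2)))
    (g := fun x : ℝ => ENNReal.ofReal (Real.exp ((1/2 - ε) * x ^ 2))) hfm hfm
  simp only [ν]
  rw [this, ldp_mgf_aux hε, sq]


lemma ldp_interval {c : ℝ} (hc : 0 < c) (u : ℝ) :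
    ENNReal.ofReal (2 * c * ((Real.sqrt (2*Real.pi))⁻¹ * Real.exp (-(|u| + c) ^ 2 / 2)))
      ≤ gaussianReal 0 1 (Set.Icc (u - c) (u + c)) := by
  rw [gaussianReal_apply_eq_integral 0 one_ne_zero]
  refine ENNReal.ofReal_le_ofReal ?_
  have hle : ∫ _ in Set.Icc (u - c) (u + c),
      ((Real.sqrt (2*Real.pi))⁻¹ * Real.exp (-(|u| + c) ^ 2 / 2)) ∂(volume)
      ≤ ∫ x in Set.Icc (u - c) (u + c), gaussianPDFReal 0 1 x ∂(volume) := by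
    refine setIntegral_mono_on (integrableOn_const (by simp))
      (integrable_gaussianPDFReal 0 1).integrableOn measurableSet_Icc fun x hx => ?_
    simp only [gaussianPDFReal, NNReal.coe_one, mul_one, sub_zero]
    refine mul_le_mul_of_nonneg_left ?_ (by positivity)
    refine Real.exp_le_exp.2 ?_
    have hx1 : |x| ≤ |u| + c := by
      rcases hx with ⟨h1, h2⟩
      rw [abs_le]
      constructor <;> [skip; skip] <;> cases abs_cases u <;> nlinarith
    have : x ^ 2 ≤ (|u| + c) ^ 2 := by nlinarith [abs_nonneg x, sq_abs x]
    linarith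
  refine le_trans (le_of_eq ?_) hle
  rw [setIntegral_const, smul_eq_mul, Real.volume_real_Icc]
  rw [show u + c - (u - c) = 2 * c by ring, max_eq_left (by positivity)]

lemma ldp_tendsto_sqrt_nat : Filter.Tendsto (fun n : ℕ => Real.sqrt n) atTop atTop := by
  refine tendsto_atTop_atTop.2 fun b => ⟨(⌈max b 0⌉₊)^2, fun n hn => ?_⟩
  have h1 : ((⌈max b 0⌉₊ : ℝ))^2 ≤ (n:ℝ) := by exact_mod_cast hn
  calc b ≤ max b 0 := le_max_left _ _
    _ ≤ ⌈max b 0⌉₊ := Nat.le_ceil _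
    _ = Real.sqrt (((⌈max b 0⌉₊ : ℝ))^2) := (Real.sqrt_sq (by positivity)).symm
    _ ≤ Real.sqrt n := Real.sqrt_le_sqrt h1


lemma ldp_upper {Ω : Type*} [MeasurableSpace Ω] (μ : Measure Ω)
    [IsProbabilityMeasure μ] (X Y : Ω → ℝ) (hX : Measurable X) (hY : Measurable Y)
    (I : ℝ × ℝ × ℝ → ℝ≥0∞)
    (hI : ∀ p : ℝ × ℝ × ℝ, I p =
      if 0 ≤ p.1 ∧ 0 ≤ p.2.1 ∧ p.2.2 ^ 2 = p.1 * p.2.1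
        then ENNReal.ofReal (p.1 / 2 + p.2.1 / 2) else ⊤)
    (ν : Measure (ℝ × ℝ)) (hνdef : ν = (gaussianReal 0 1).prod (gaussianReal 0 1))
    (T : ℕ → ℝ × ℝ → ℝ × ℝ × ℝ)
    (hTdef : T = fun (n : ℕ) (w : ℝ × ℝ) =>
      ((n : ℝ)⁻¹ * w.1 ^ 2, (n : ℝ)⁻¹ * w.2 ^ 2, (n : ℝ)⁻¹ * (w.1 * w.2)))
    (hkey : ∀ (n : ℕ) (S : Set (ℝ × ℝ × ℝ)), MeasurableSet S →
      μ {ω | ((n : ℝ)⁻¹ * (X ω) ^ 2, (n : ℝ)⁻¹ * (Y ω) ^ 2, (n : ℝ)⁻¹ * (X ω * Y ω)) ∈ S}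
        = ν (T n ⁻¹' S)) :
    ∀ F : Set (ℝ × ℝ × ℝ), IsClosed F →
      Filter.limsup
        (fun n : ℕ => (((n : ℝ))⁻¹ : EReal) *
          ENNReal.log (μ {ω | ((n : ℝ)⁻¹ * (X ω) ^ 2, (n : ℝ)⁻¹ * (Y ω) ^ 2,
            (n : ℝ)⁻¹ * (X ω * Y ω)) ∈ F}))
        Filter.atTop ≤ -(⨅ x ∈ F, (I x : EReal)) := by
  intro F hF
  have hkeyF := fun n => hkey n F hF.measurableSet
  by_cases hfin : ∃ p ∈ F, I p ≠ ⊤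
  · obtain ⟨p₀, hp₀F, hp₀⟩ := hfin
    set m := ⨅ x ∈ F, (I x : EReal) with hm
    have hmle : ∀ p ∈ F, m ≤ (I p : EReal) := fun p hp => iInf₂_le p hp
    have hm_top : m ≠ ⊤ := by
      refine ne_top_of_le_ne_top ?_ (hmle p₀ hp₀F)
      exact fun h => hp₀ (by simpa using h)
    have hm0 : (0 : EReal) ≤ m := le_iInf₂ fun p _ => EReal.coe_ennreal_nonneg _
    have hm_bot : m ≠ ⊥ := fun h => by simp [h] at hm0
    set r : ℝ := m.toReal with hrdef
    have hmr : m = (r : EReal) := (EReal.coe_toReal hm_top hm_bot).symm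
    have hr0 : (0 : ℝ) ≤ r := by
      have := hm0; rw [hmr] at this; exact_mod_cast this
    rw [hmr, ← EReal.coe_neg]
    refine EReal.le_of_forall_lt_iff_le.1 fun z hz => ?_
    have hz' : -r < z := by exact_mod_cast hz
    set δ : ℝ := z + r with hδdef
    have hδ : 0 < δ := by linarith
    set ε : ℝ := min (1/4) (δ/(4*(r+1))) with hεdef
    have hε : 0 < ε := lt_min (by norm_num) (by positivity)
    have hε2 : ε ≤ 1/2 := le_trans (min_le_left _ _) (by norm_num)
    have hεr : 2*ε*r ≤ δ/2 := by
      have h1 : ε ≤ δ/(4*(r+1)) := min_le_right _ _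
      rw [le_div_iff₀ (by positivity : (0:ℝ) < 4*(r+1))] at h1
      nlinarith [hε.le, hr0]
    set K : ℝ := (Real.sqrt (2*Real.pi))⁻¹ * Real.sqrt (Real.pi / ε) with hKdef
    have hK : 0 < K := by
      have := Real.pi_pos
      positivity
    set a : ℝ := Real.log (K^2) with hadef
    -- event inclusion
    have hincl : ∀ n : ℕ, 1 ≤ n →
        T n ⁻¹' F ⊆ {w : ℝ × ℝ | 2*n*r ≤ w.1^2 + w.2^2} := by
      intro n hn w hw
      have hn' : (0:ℝ) < n := by exact_mod_cast hn
      have hpF : T n w ∈ F := hw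
      have hIp := hmle _ hpF
      rw [hI, hTdef] at hIp
      simp only at hIp
      rw [if_pos ⟨by positivity, by positivity, by ring⟩] at hIp
      rw [hmr] at hIp
      set t : ℝ := (n : ℝ)⁻¹ * w.1 ^ 2 / 2 + (n : ℝ)⁻¹ * w.2 ^ 2 / 2 with htdef
      have ht0 : 0 ≤ t := by positivity
      have hIp' : (r : EReal) ≤ (t : ℝ) := by
        rwa [EReal.coe_ennreal_ofReal, max_eq_left ht0] at hIp
      have hrt : r ≤ t := by exact_mod_cast hIp'
      have hinv : (n:ℝ)⁻¹ * n = 1 := inv_mul_cancel₀ (ne_of_gt hn')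
      show 2*(n:ℝ)*r ≤ w.1^2 + w.2^2
      have := mul_le_mul_of_nonneg_left hrt (le_of_lt (show (0:ℝ) < 2*n by positivity))
      calc 2*(n:ℝ)*r ≤ 2*(n:ℝ)*t := this
        _ = w.1^2 + w.2^2 := by rw [htdef]; field_simp
    -- measure bound
    have hbound : ∀ n : ℕ, 1 ≤ n →
        μ {ω | ((n : ℝ)⁻¹ * (X ω) ^ 2, (n : ℝ)⁻¹ * (Y ω) ^ 2,
            (n : ℝ)⁻¹ * (X ω * Y ω)) ∈ F}
          ≤ ENNReal.ofReal (K^2 * Real.exp (-(1/2-ε) * (2*n*r))) := by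
      intro n hn
      rw [hkeyF n]
      refine le_trans (measure_mono (hincl n hn)) ?_
      rw [hνdef]
      refine le_trans (ldp_chernoff hε hε2 (2*n*r)) ?_
      rw [← hKdef, ← ENNReal.ofReal_pow hK.le, ← ENNReal.ofReal_mul (by positivity)]
      rw [mul_comm]
    -- conclude
    have hev : ∀ᶠ n : ℕ in atTop, (((n : ℝ))⁻¹ : EReal) *
        ENNReal.log (μ {ω | ((n : ℝ)⁻¹ * (X ω) ^ 2, (n : ℝ)⁻¹ * (Y ω) ^ 2,
            (n : ℝ)⁻¹ * (X ω * Y ω)) ∈ F}) ≤ (z : EReal) := by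
      have htend : Tendsto (fun n : ℕ => a / n) atTop (nhds 0) :=
        tendsto_const_div_atTop_nhds_zero_nat a
      have hev2 : ∀ᶠ n : ℕ in atTop, a / n ≤ δ/2 := by
        filter_upwards [htend.eventually (eventually_le_nhds (by linarith : (0:ℝ) < δ/2))]
          with n h using h
      filter_upwards [hev2, eventually_ge_atTop 1] with n han hn
      have hn' : (0:ℝ) < n := by exact_mod_cast hn
      set E := μ {ω | ((n : ℝ)⁻¹ * (X ω) ^ 2, (n : ℝ)⁻¹ * (Y ω) ^ 2,
            (n : ℝ)⁻¹ * (X ω * Y ω)) ∈ F} with hEdef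
      by_cases hE0 : E = 0
      · rw [hE0]
        simp only [ENNReal.log_zero]
        rw [← EReal.coe_inv, EReal.coe_mul_bot_of_pos (by positivity : (0:ℝ) < (n:ℝ)⁻¹)]
        exact bot_le
      · have hEtop : E ≠ ⊤ := measure_ne_top μ _
        have hlogE : ENNReal.log E = (Real.log E.toReal : EReal) := by
          simp [ENNReal.log, hE0, hEtop]
        have hBpos : (0:ℝ) < K^2 * Real.exp (-(1/2-ε) * (2*n*r)) := by positivity
        have h1 : ENNReal.log E ≤ (Real.log (K^2 * Real.exp (-(1/2-ε) * (2*n*r))) : EReal) := by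
          rw [← ENNReal.log_ofReal_of_pos hBpos]
          exact ENNReal.log_monotone (hbound n hn)
        rw [hlogE] at h1
        have h2 : Real.log E.toReal ≤ a - (1-2*ε)*(n*r) := by
          have := EReal.coe_le_coe_iff.1 h1
          rwa [Real.log_mul (by positivity) (Real.exp_ne_zero _), Real.log_exp, ← hadef,
            show -(1/2-ε) * (2*(n:ℝ)*r) = -((1-2*ε)*((n:ℝ)*r)) by ring, ← sub_eq_add_neg] at this
        rw [hlogE, ← EReal.coe_inv, ← EReal.coe_mul, EReal.coe_le_coe_iff]
        have h3 : (n:ℝ)⁻¹ * Real.log E.toReal ≤ (n:ℝ)⁻¹ * (a - (1-2*ε)*(n*r)) :=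
          mul_le_mul_of_nonneg_left h2 (by positivity)
        have h4 : (n:ℝ)⁻¹ * (a - (1-2*ε)*(n*r)) = a/n - (1-2*ε)*r := by
          field_simp
        have h5 : a/n - (1-2*ε)*r ≤ δ/2 - r + 2*ε*r := by linarith
        calc (n:ℝ)⁻¹ * Real.log E.toReal ≤ a/n - (1-2*ε)*r := by rw [← h4]; exact h3
          _ ≤ δ/2 - r + 2*ε*r := h5
          _ ≤ δ/2 - r + δ/2 := by linarith
          _ = z := by rw [hδdef]; ring
    exact limsup_le_of_le (by isBoundedDefault) hev
  · push_neg at hfin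
    have hev : ∀ᶠ n : ℕ in atTop, (((n : ℝ))⁻¹ : EReal) *
        ENNReal.log (μ {ω | ((n : ℝ)⁻¹ * (X ω) ^ 2, (n : ℝ)⁻¹ * (Y ω) ^ 2,
            (n : ℝ)⁻¹ * (X ω * Y ω)) ∈ F}) ≤ (⊥ : EReal) := by
      filter_upwards [eventually_ge_atTop 1] with n hn
      have hn' : (0:ℝ) < n := by exact_mod_cast hn
      have hempty : {ω | ((n : ℝ)⁻¹ * (X ω) ^ 2, (n : ℝ)⁻¹ * (Y ω) ^ 2,
            (n : ℝ)⁻¹ * (X ω * Y ω)) ∈ F} = ∅ := by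
        ext ω
        simp only [Set.mem_setOf_eq, Set.mem_empty_iff_false, iff_false]
        intro hmem
        have h1 := hfin _ hmem
        rw [hI] at h1
        rw [if_pos ⟨by positivity, by positivity, by ring⟩] at h1
        exact ENNReal.ofReal_ne_top h1
      rw [hempty]
      simp only [measure_empty, ENNReal.log_zero]
      rw [← EReal.coe_inv, EReal.coe_mul_bot_of_pos (by positivity : (0:ℝ) < (n:ℝ)⁻¹)]
    exact le_trans (limsup_le_of_le (by isBoundedDefault) hev) bot_le

lemma ldp_lower {Ω : Type*} [MeasurableSpace Ω] (μ : Measure Ω)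
    [IsProbabilityMeasure μ] (X Y : Ω → ℝ) (hX : Measurable X) (hY : Measurable Y)
    (I : ℝ × ℝ × ℝ → ℝ≥0∞)
    (hI : ∀ p : ℝ × ℝ × ℝ, I p =
      if 0 ≤ p.1 ∧ 0 ≤ p.2.1 ∧ p.2.2 ^ 2 = p.1 * p.2.1
        then ENNReal.ofReal (p.1 / 2 + p.2.1 / 2) else ⊤)
    (ν : Measure (ℝ × ℝ)) (hνdef : ν = (gaussianReal 0 1).prod (gaussianReal 0 1))
    (T : ℕ → ℝ × ℝ → ℝ × ℝ × ℝ)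
    (hTdef : T = fun (n : ℕ) (w : ℝ × ℝ) =>
      ((n : ℝ)⁻¹ * w.1 ^ 2, (n : ℝ)⁻¹ * w.2 ^ 2, (n : ℝ)⁻¹ * (w.1 * w.2)))
    (hkey : ∀ (n : ℕ) (S : Set (ℝ × ℝ × ℝ)), MeasurableSet S →
      μ {ω | ((n : ℝ)⁻¹ * (X ω) ^ 2, (n : ℝ)⁻¹ * (Y ω) ^ 2, (n : ℝ)⁻¹ * (X ω * Y ω)) ∈ S}
        = ν (T n ⁻¹' S)) :
    ∀ G : Set (ℝ × ℝ × ℝ), IsOpen G →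
      -(⨅ x ∈ G, (I x : EReal)) ≤
      Filter.liminf
        (fun n : ℕ => (((n : ℝ))⁻¹ : EReal) *
          ENNReal.log (μ {ω | ((n : ℝ)⁻¹ * (X ω) ^ 2, (n : ℝ)⁻¹ * (Y ω) ^ 2,
            (n : ℝ)⁻¹ * (X ω * Y ω)) ∈ G}))
        Filter.atTop := by
  intro G hG
  have hkeyG := fun n => hkey n G hG.measurableSet
  rw [EReal.neg_le]
  refine le_iInf₂ fun p hp => ?_
  rw [← EReal.neg_le]
  by_cases hptop : I p = ⊤
  · rw [hptop]
    refine le_trans (le_of_eq ?_) bot_le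
    rfl
  · rw [hI] at hptop
    by_cases hcond : 0 ≤ p.1 ∧ 0 ≤ p.2.1 ∧ p.2.2 ^ 2 = p.1 * p.2.1
    swap
    · rw [if_neg hcond] at hptop; exact absurd rfl hptop
    obtain ⟨hx, hy, hz⟩ := hcond
    have hIp : I p = ENNReal.ofReal (p.1 / 2 + p.2.1 / 2) := by
      rw [hI, if_pos ⟨hx, hy, hz⟩]
    set u : ℝ := Real.sqrt p.1 with hudef
    set v : ℝ := if 0 ≤ p.2.2 then Real.sqrt p.2.1 else -Real.sqrt p.2.1 with hvdef
    have hu2 : u^2 = p.1 := Real.sq_sqrt hx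
    have hv2 : v^2 = p.2.1 := by
      rw [hvdef]; split_ifs with h
      · exact Real.sq_sqrt hy
      · rw [neg_sq]; exact Real.sq_sqrt hy
    have habs : Real.sqrt p.1 * Real.sqrt p.2.1 = |p.2.2| := by
      rw [← Real.sqrt_mul hx, ← hz, Real.sqrt_sq_eq_abs]
    have huv : u * v = p.2.2 := by
      rw [hudef, hvdef]
      split_ifs with hsign
      · rw [habs, abs_of_nonneg hsign]
      · rw [mul_neg, habs, abs_of_neg (not_le.1 hsign)]; ring
    have hneg : -((I p : ℝ≥0∞) : EReal) = ((-(p.1/2 + p.2.1/2) : ℝ) : EReal) := by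
      rw [hIp, EReal.coe_ennreal_ofReal, max_eq_left (by positivity), ← EReal.coe_neg]
    rw [hneg]
    refine EReal.ge_of_forall_gt_iff_ge.1 fun w hw => ?_
    have hw' : w < -(p.1/2 + p.2.1/2) := by exact_mod_cast hw
    set T1 : ℝ × ℝ → ℝ × ℝ × ℝ := fun q => (q.1^2, q.2^2, q.1*q.2) with hT1def
    have hT1cont : Continuous T1 := by fun_prop
    have hT1uv : T1 (u, v) = p := by
      rw [hT1def]; simp only; rw [hu2, hv2, huv]
    have hmem : (u, v) ∈ T1 ⁻¹' G := by
      simp only [Set.mem_preimage, hT1uv]; exact hp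
    obtain ⟨ρ, hρ, hball⟩ := Metric.isOpen_iff.1 (hG.preimage hT1cont) (u, v) hmem
    set c : ℝ := min 1 (ρ/2) with hcdef
    have hc : 0 < c := lt_min one_pos (by positivity)
    have hc1 : c ≤ 1 := min_le_left _ _
    have hcρ : c ≤ ρ/2 := min_le_right _ _
    set B : ℝ := (Real.sqrt (2*Real.pi))⁻¹ with hBdef
    have hB : 0 < B := by have := Real.pi_pos; positivity
    -- event inclusion
    have hincl : ∀ n : ℕ, 1 ≤ n →
        (Set.Icc (Real.sqrt n * u - c) (Real.sqrt n * u + c) ×ˢ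
         Set.Icc (Real.sqrt n * v - c) (Real.sqrt n * v + c)) ⊆ T n ⁻¹' G := by
      intro n hn q hq
      obtain ⟨hq1, hq2⟩ := hq
      set s : ℝ := Real.sqrt n with hsdef
      have hs1 : 1 ≤ s := by
        rw [hsdef, show (1:ℝ) = Real.sqrt 1 by simp]
        exact Real.sqrt_le_sqrt (by exact_mod_cast hn)
      have hs0 : 0 < s := lt_of_lt_of_le one_pos hs1
      have hs2 : s^2 = n := Real.sq_sqrt (by positivity)
      have key : ∀ a b : ℝ, s*a - c ≤ b → b ≤ s*a + c → dist (b/s) a < ρ := by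
        intro a b h1 h2
        rw [Real.dist_eq, show b/s - a = (b - s*a)/s by field_simp, abs_div,
          abs_of_pos hs0]
        have h3 : |b - s*a| ≤ c := abs_le.2 ⟨by linarith, by linarith⟩
        have h4 : |b - s*a|/s ≤ c/s := div_le_div_of_nonneg_right h3 hs0.le |>.trans le_rfl
        have h5 : c/s ≤ c := div_le_self hc.le hs1
        linarith
      have hmem2 : (q.1/s, q.2/s) ∈ Metric.ball (u,v) ρ := by
        rw [Metric.mem_ball, Prod.dist_eq]
        exact max_lt (key u q.1 hq1.1 hq1.2) (key v q.2 hq2.1 hq2.2)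
      have h3 := hball hmem2
      rw [Set.mem_preimage, hT1def] at h3
      simp only at h3
      have hn0 : ((n:ℝ)) ≠ 0 := by
        have : (0:ℝ) < n := by exact_mod_cast hn
        exact ne_of_gt this
      have e1 : (q.1/s)^2 = (n:ℝ)⁻¹ * q.1^2 := by
        rw [div_pow, hs2, inv_mul_eq_div]
      have e2 : (q.2/s)^2 = (n:ℝ)⁻¹ * q.2^2 := by
        rw [div_pow, hs2, inv_mul_eq_div]
      have e3 : (q.1/s)*(q.2/s) = (n:ℝ)⁻¹ * (q.1*q.2) := by
        rw [div_mul_div_comm, show s*s = ((n:ℕ):ℝ) by rw [← hs2]; ring, inv_mul_eq_div]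
      rw [e1, e2, e3] at h3
      show T n q ∈ G
      rw [hTdef]
      exact h3
    -- measure lower bound
    have hmb : ∀ n : ℕ, 1 ≤ n →
        ENNReal.ofReal ((2*c*B)^2 *
          Real.exp (-(Real.sqrt n * |u| + c)^2/2 - (Real.sqrt n * |v| + c)^2/2))
          ≤ ν (T n ⁻¹' G) := by
      intro n hn
      refine le_trans ?_ (measure_mono (hincl n hn))
      rw [hνdef, Measure.prod_prod]
      have hgu := ldp_interval hc (Real.sqrt n * u)
      have hgv := ldp_interval hc (Real.sqrt n * v)
      have habsu : |Real.sqrt n * u| = Real.sqrt n * |u| := by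
        rw [abs_mul, abs_of_nonneg (Real.sqrt_nonneg _)]
      have habsv : |Real.sqrt n * v| = Real.sqrt n * |v| := by
        rw [abs_mul, abs_of_nonneg (Real.sqrt_nonneg _)]
      rw [habsu] at hgu
      rw [habsv] at hgv
      refine le_trans (le_of_eq ?_) (mul_le_mul' hgu hgv)
      rw [← ENNReal.ofReal_mul (by positivity)]
      congr 1
      rw [show -(Real.sqrt n * |u| + c)^2/2 - (Real.sqrt n * |v| + c)^2/2
          = (-(Real.sqrt n * |u| + c)^2/2) + (-(Real.sqrt n * |v| + c)^2/2) by ring,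
        Real.exp_add]
      ring
    -- conclusion
    have htendg : Filter.Tendsto (fun n : ℕ => Real.log ((2*c*B)^2) / n -
        ((|u| + c/Real.sqrt n)^2 + (|v| + c/Real.sqrt n)^2)/2) atTop
        (nhds (-(p.1/2 + p.2.1/2))) := by
      have h1 := tendsto_const_div_atTop_nhds_zero_nat (Real.log ((2*c*B)^2))
      have h2 : Filter.Tendsto (fun n : ℕ => c / Real.sqrt n) atTop (nhds 0) :=
        Filter.Tendsto.div_atTop tendsto_const_nhds ldp_tendsto_sqrt_nat
      have h3 : Filter.Tendsto (fun n : ℕ =>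
          ((|u| + c/Real.sqrt n)^2 + (|v| + c/Real.sqrt n)^2)/2) atTop
          (nhds (((|u| + 0)^2 + (|v| + 0)^2)/2)) :=
        Filter.Tendsto.div_const
          (((tendsto_const_nhds.add h2).pow 2).add ((tendsto_const_nhds.add h2).pow 2)) 2
      have h4 := h1.sub h3
      rw [zero_sub] at h4
      have h5 : ((|u| + 0)^2 + (|v| + 0)^2)/2 = p.1/2 + p.2.1/2 := by
        rw [add_zero, add_zero, sq_abs, sq_abs, hu2, hv2]; ring
      rw [h5] at h4
      exact h4
    have hev : ∀ᶠ n : ℕ in atTop, (w : EReal) ≤ (((n : ℝ))⁻¹ : EReal) *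
        ENNReal.log (μ {ω | ((n : ℝ)⁻¹ * (X ω) ^ 2, (n : ℝ)⁻¹ * (Y ω) ^ 2,
            (n : ℝ)⁻¹ * (X ω * Y ω)) ∈ G}) := by
      filter_upwards [htendg.eventually (eventually_gt_nhds hw'), eventually_ge_atTop 1]
        with n hgn hn
      have hn' : (0:ℝ) < n := by exact_mod_cast hn
      set s : ℝ := Real.sqrt n with hsdef
      have hs0 : 0 < s := Real.sqrt_pos.2 hn'
      have hs2 : s^2 = n := Real.sq_sqrt (by positivity)
      set A : ℝ := (2*c*B)^2 * Real.exp (-(s * |u| + c)^2/2 - (s * |v| + c)^2/2) with hAdef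
      have hA : 0 < A := by positivity
      set E := μ {ω | ((n : ℝ)⁻¹ * (X ω) ^ 2, (n : ℝ)⁻¹ * (Y ω) ^ 2,
            (n : ℝ)⁻¹ * (X ω * Y ω)) ∈ G} with hEdef
      have hElb : ENNReal.ofReal A ≤ E := by
        rw [hEdef, hkeyG n]
        exact hmb n hn
      have hEtop : E ≠ ⊤ := measure_ne_top μ _
      have hE0 : E ≠ 0 := by
        intro h
        rw [h, le_zero_iff] at hElb
        exact (ENNReal.ofReal_pos.2 hA).ne' hElb
      have hlogE : ENNReal.log E = (Real.log E.toReal : EReal) := by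
        simp [ENNReal.log, hE0, hEtop]
      have hAle : A ≤ E.toReal := (ENNReal.ofReal_le_iff_le_toReal hEtop).1 hElb
      have hloglb : Real.log A ≤ Real.log E.toReal := Real.log_le_log hA hAle
      -- identify (1/n) log A with g n
      have hgA : (n:ℝ)⁻¹ * Real.log A = Real.log ((2*c*B)^2) / n -
          ((|u| + c/s)^2 + (|v| + c/s)^2)/2 := by
        rw [hAdef, Real.log_mul (by positivity) (Real.exp_ne_zero _), Real.log_exp]
        have hsne : s ≠ 0 := ne_of_gt hs0
        have hnne : (n:ℝ) ≠ 0 := ne_of_gt hn'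
        have e : ∀ t : ℝ, (s*t + c)^2 = (n:ℝ) * (t + c/s)^2 := by
          intro t
          have h6 : s*t + c = s*(t + c/s) := by field_simp
          rw [h6, mul_pow, hs2]
        rw [e |u|, e |v|]
        field_simp
        ring
      rw [hlogE, ← EReal.coe_inv, ← EReal.coe_mul, EReal.coe_le_coe_iff]
      have hfin : w ≤ (n:ℝ)⁻¹ * Real.log A := by
        rw [hgA]; exact le_of_lt hgn
      refine hfin.trans (mul_le_mul_of_nonneg_left hloglb (by positivity))
    exact le_liminf_of_le (by isBoundedDefault) hev

lemma ldp_good (I : ℝ × ℝ × ℝ → ℝ≥0∞)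
    (hI : ∀ p : ℝ × ℝ × ℝ, I p =
      if 0 ≤ p.1 ∧ 0 ≤ p.2.1 ∧ p.2.2 ^ 2 = p.1 * p.2.1
        then ENNReal.ofReal (p.1 / 2 + p.2.1 / 2) else ⊤) :
    LowerSemicontinuous I ∧ (∀ c : ℝ≥0∞, c ≠ ⊤ → IsCompact {x | I x ≤ c}) ∧
    ¬ (∀ p q : ℝ × ℝ × ℝ, ∀ a b : ℝ, 0 ≤ a → 0 ≤ b → a + b = 1 →
        I (a • p + b • q) ≤ ENNReal.ofReal a * I p + ENNReal.ofReal b * I q) := by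
  set C : Set (ℝ × ℝ × ℝ) := {q | 0 ≤ q.1 ∧ 0 ≤ q.2.1 ∧ q.2.2 ^ 2 = q.1 * q.2.1} with hCdef
  have hCc : IsClosed C := by
    have hCeq : C = {q : ℝ × ℝ × ℝ | 0 ≤ q.1} ∩
        ({q : ℝ × ℝ × ℝ | 0 ≤ q.2.1} ∩ {q : ℝ × ℝ × ℝ | q.2.2 ^ 2 = q.1 * q.2.1}) := by
      ext q; simp [hCdef, Set.mem_setOf_eq, Set.mem_inter_iff]
    rw [hCeq]
    exact (isClosed_le continuous_const (by fun_prop)).inter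
      ((isClosed_le continuous_const (by fun_prop)).inter
        (isClosed_eq (by fun_prop) (by fun_prop)))
  have hJcont : Continuous (fun q : ℝ × ℝ × ℝ => ENNReal.ofReal (q.1/2 + q.2.1/2)) :=
    ENNReal.continuous_ofReal.comp (by fun_prop)
  refine ⟨?_, ?_, ?_⟩
  · -- LSC
    intro p c hc
    by_cases hpC : p ∈ C
    · have hpC' : 0 ≤ p.1 ∧ 0 ≤ p.2.1 ∧ p.2.2 ^ 2 = p.1 * p.2.1 := hpC
      have hc' : c < ENNReal.ofReal (p.1/2 + p.2.1/2) := by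
        rw [hI p] at hc
        split_ifs at hc
        exact hc
      have hU : IsOpen {q : ℝ × ℝ × ℝ | c < ENNReal.ofReal (q.1/2 + q.2.1/2)} :=
        isOpen_lt continuous_const hJcont
      filter_upwards [hU.mem_nhds hc'] with q hq
      rw [hI q]
      split_ifs with h
      · exact hq
      · exact lt_of_lt_of_le (lt_of_lt_of_le hc le_top) le_top
    · filter_upwards [hCc.isOpen_compl.mem_nhds hpC] with q hq
      have hq' : ¬(0 ≤ q.1 ∧ 0 ≤ q.2.1 ∧ q.2.2 ^ 2 = q.1 * q.2.1) := hq
      rw [hI q]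
      split_ifs
      exact lt_of_lt_of_le (lt_of_lt_of_le hc le_top) le_top
  · -- compact sublevels
    intro c hctop
    set c' : ℝ := c.toReal with hc'def
    have hc'0 : 0 ≤ c' := ENNReal.toReal_nonneg
    have hSsub : {x | I x ≤ c} ⊆
        Set.Icc (0:ℝ) (2*c') ×ˢ (Set.Icc (0:ℝ) (2*c') ×ˢ Set.Icc (-(2*c')) (2*c')) := by
      intro q hq
      simp only [Set.mem_setOf_eq] at hq
      rw [hI q] at hq
      by_cases h : 0 ≤ q.1 ∧ 0 ≤ q.2.1 ∧ q.2.2 ^ 2 = q.1 * q.2.1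
      · rw [if_pos h] at hq
        obtain ⟨h1, h2, h3⟩ := h
        have ht : q.1/2 + q.2.1/2 ≤ c' :=
          (ENNReal.ofReal_le_iff_le_toReal hctop).1 hq
        have hq1 : q.1 ≤ 2*c' := by linarith
        have hq2 : q.2.1 ≤ 2*c' := by linarith
        have hzsq : q.2.2 ^ 2 ≤ (2*c')^2 := by nlinarith
        have hzabs : |q.2.2| ≤ 2*c' := by
          have := Real.sqrt_le_sqrt hzsq
          rwa [Real.sqrt_sq_eq_abs, Real.sqrt_sq (by positivity)] at this
        exact ⟨⟨h1, hq1⟩, ⟨h2, hq2⟩, abs_le.1 hzabs⟩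
      · rw [if_neg h] at hq
        exact absurd (top_le_iff.1 (le_trans le_top hq)) hctop
    have hSclosed : IsClosed {x | I x ≤ c} := by
      have hSeq : {x | I x ≤ c} = C ∩
          {q : ℝ × ℝ × ℝ | ENNReal.ofReal (q.1/2 + q.2.1/2) ≤ c} := by
        ext q
        simp only [Set.mem_setOf_eq, Set.mem_inter_iff, hI q]
        constructor
        · intro hq
          by_cases h : 0 ≤ q.1 ∧ 0 ≤ q.2.1 ∧ q.2.2 ^ 2 = q.1 * q.2.1
          · rw [if_pos h] at hq; exact ⟨h, hq⟩
          · rw [if_neg h] at hq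
            exact absurd (top_le_iff.1 (le_trans le_top hq)) hctop
        · rintro ⟨h, hq⟩
          have h' : 0 ≤ q.1 ∧ 0 ≤ q.2.1 ∧ q.2.2 ^ 2 = q.1 * q.2.1 := h
          split_ifs
          exact hq
      rw [hSeq]
      exact hCc.inter (IsClosed.preimage hJcont isClosed_Iic)
    exact IsCompact.of_isClosed_subset
      (isCompact_Icc.prod (isCompact_Icc.prod isCompact_Icc)) hSclosed hSsub
  · -- non-convexity
    intro h
    have h1 := h (1,1,1) (1,1,-1) (1/2) (1/2) (by norm_num) (by norm_num) (by norm_num)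
    have he : ((1:ℝ)/2) • ((1:ℝ),(1:ℝ),(1:ℝ)) + ((1:ℝ)/2) • ((1:ℝ),(1:ℝ),(-1:ℝ))
        = ((1:ℝ),(1:ℝ),(0:ℝ)) := by
      norm_num [Prod.ext_iff, Prod.smul_mk]
    rw [he] at h1
    have hmid : I (1,1,0) = ⊤ := by
      rw [hI]; norm_num
    have hp1 : I (1,1,1) = ENNReal.ofReal 1 := by
      rw [hI]; norm_num
    have hp2 : I (1,1,-1) = ENNReal.ofReal 1 := by
      rw [hI]; norm_num
    rw [hmid, hp1, hp2, top_le_iff] at h1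
    exact (ENNReal.add_ne_top.2 ⟨ENNReal.mul_ne_top ENNReal.ofReal_ne_top ENNReal.ofReal_ne_top,
      ENNReal.mul_ne_top ENNReal.ofReal_ne_top ENNReal.ofReal_ne_top⟩) h1

end LDPAux

open ProbabilityTheory in
/-- For `X, Y` independent standard Gaussians and `Z = (X², Y², XY)`, the sequence `Z/n`
satisfies the LDP on `ℝ³` with the good rate function
`I(x,y,z) = x/2 + y/2` if `x ≥ 0, y ≥ 0, z² = xy` and `+∞` otherwise; this rate function
is not convex. -/
theorem ldp_nonconvex_gaussian {Ω : Type*} [MeasurableSpace Ω] (μ : Measure Ω)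
    [IsProbabilityMeasure μ] (X Y : Ω → ℝ) (hX : Measurable X) (hY : Measurable Y)
    (hindep : IndepFun X Y μ)
    (hlawX : μ.map X = gaussianReal 0 1) (hlawY : μ.map Y = gaussianReal 0 1)
    (I : ℝ × ℝ × ℝ → ℝ≥0∞)
    (hI : ∀ p : ℝ × ℝ × ℝ, I p =
      if 0 ≤ p.1 ∧ 0 ≤ p.2.1 ∧ p.2.2 ^ 2 = p.1 * p.2.1
        then ENNReal.ofReal (p.1 / 2 + p.2.1 / 2) else ⊤) :
    LDP μ
      (fun n ω => ((n : ℝ)⁻¹ * (X ω) ^ 2, (n : ℝ)⁻¹ * (Y ω) ^ 2, (n : ℝ)⁻¹ * (X ω * Y ω)))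
      I ∧
    GoodRate I ∧
    ¬ (∀ p q : ℝ × ℝ × ℝ, ∀ a b : ℝ, 0 ≤ a → 0 ≤ b → a + b = 1 →
        I (a • p + b • q) ≤ ENNReal.ofReal a * I p + ENNReal.ofReal b * I q) := by
  set ν : Measure (ℝ × ℝ) := (gaussianReal 0 1).prod (gaussianReal 0 1) with hνdef
  have hν : μ.map (fun ω => (X ω, Y ω)) = ν := by
    rw [hνdef, (indepFun_iff_map_prod_eq_prod_map_map hX.aemeasurable hY.aemeasurable).mp hindep,
      hlawX, hlawY]
  set T : ℕ → ℝ × ℝ → ℝ × ℝ × ℝ := fun n w =>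
    ((n : ℝ)⁻¹ * w.1 ^ 2, (n : ℝ)⁻¹ * w.2 ^ 2, (n : ℝ)⁻¹ * (w.1 * w.2)) with hTdef
  have hTmeas : ∀ n, Measurable (T n) := fun n => by fun_prop
  have hkey : ∀ (n : ℕ) (S : Set (ℝ × ℝ × ℝ)), MeasurableSet S →
      μ {ω | ((n : ℝ)⁻¹ * (X ω) ^ 2, (n : ℝ)⁻¹ * (Y ω) ^ 2, (n : ℝ)⁻¹ * (X ω * Y ω)) ∈ S}
        = ν (T n ⁻¹' S) := by
    intro n S hS
    rw [← hν, Measure.map_apply (hX.prodMk hY) ((hTmeas n) hS)]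
    rfl
  obtain ⟨hlsc, hcomp, hnc⟩ := ldp_good I hI
  exact ⟨⟨ldp_upper μ X Y hX hY I hI ν hνdef T hTdef hkey,
    ldp_lower μ X Y hX hY I hI ν hνdef T hTdef hkey⟩, ⟨hlsc, hcomp⟩, hnc⟩
end
end

section
/- Let 1 < κ₂ < κ₁ with κ₁ < 2κ₂ − 1. Then the system x₀+x₁ = 1, y₀+y₁ = 1, x₀+κ₁x₁ = κ₂, y₀+κ₁y₁ = κ₂, x₁y₁ < x₀y₀ has NO solution with x₀, y₀, x₁, y₁ > 0; whereas the system x₀+x₁+x₂ = 1, y₀+y₁+y₂ = 1, x₀+κ₁x₁+κ₂x₂ = κ₂, y₀+κ₁y₁+κ₂y₂ = κ₂, r₀² − x₁y₁ + x₂y₂ = 0 DOES have a solution with x₀,y₀,x₁,y₁,x₂,y₂ > 0, r₀ = 0, namely x₀ = y₀ = (κ₁−κ₂)/(κ₁+κ₂−2) and x₁ = y₁ = x₂ = y₂ = (κ₂−1)/(κ₁+κ₂−2). -/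
/-- Algebraic core of the influence of the second largest eigenvalue: for
`1 < κ₂ < κ₁ < 2κ₂ − 1`, the first system (with one outlier) has no positive solution,
while the second system (with two outliers) has the explicit positive solution
`x₀ = y₀ = (κ₁−κ₂)/(κ₁+κ₂−2)`, `x₁ = y₁ = x₂ = y₂ = (κ₂−1)/(κ₁+κ₂−2)`, `r₀ = 0`. -/
theorem second_eigenvalue_systems (κ₁ κ₂ : ℝ) (h1 : 1 < κ₂) (h2 : κ₂ < κ₁)
    (h3 : κ₁ < 2 * κ₂ - 1) :
    (¬ ∃ x₀ y₀ x₁ y₁ : ℝ, 0 < x₀ ∧ 0 < y₀ ∧ 0 < x₁ ∧ 0 < y₁ ∧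
        x₀ + x₁ = 1 ∧ y₀ + y₁ = 1 ∧ x₀ + κ₁ * x₁ = κ₂ ∧ y₀ + κ₁ * y₁ = κ₂ ∧
        x₁ * y₁ < x₀ * y₀) ∧
    (∃ x₀ y₀ x₁ y₁ x₂ y₂ r₀ : ℝ, 0 < x₀ ∧ 0 < y₀ ∧ 0 < x₁ ∧ 0 < y₁ ∧ 0 < x₂ ∧ 0 < y₂ ∧
        r₀ = 0 ∧
        x₀ = (κ₁ - κ₂) / (κ₁ + κ₂ - 2) ∧ y₀ = (κ₁ - κ₂) / (κ₁ + κ₂ - 2) ∧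
        x₁ = (κ₂ - 1) / (κ₁ + κ₂ - 2) ∧ y₁ = (κ₂ - 1) / (κ₁ + κ₂ - 2) ∧
        x₂ = (κ₂ - 1) / (κ₁ + κ₂ - 2) ∧ y₂ = (κ₂ - 1) / (κ₁ + κ₂ - 2) ∧
        x₀ + x₁ + x₂ = 1 ∧ y₀ + y₁ + y₂ = 1 ∧
        x₀ + κ₁ * x₁ + κ₂ * x₂ = κ₂ ∧ y₀ + κ₁ * y₁ + κ₂ * y₂ = κ₂ ∧
        r₀ ^ 2 - x₁ * y₁ + x₂ * y₂ = 0) := by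
  have hD : 0 < κ₁ + κ₂ - 2 := by linarith
  constructor
  · rintro ⟨x₀, y₀, x₁, y₁, hx₀, hy₀, hx₁, hy₁, e1, e2, e3, e4, hlt⟩
    -- x₀ and y₀ are forced: (κ₁-1)*x₀ = κ₁-κ₂ etc.
    have hk : (0:ℝ) < κ₁ - 1 := by linarith
    have hx : x₀ = (κ₁ - κ₂) / (κ₁ - 1) := by
      field_simp; nlinarith [e1, e3]
    have hy : y₀ = (κ₁ - κ₂) / (κ₁ - 1) := by
      field_simp; nlinarith [e2, e4]
    have hx1 : x₁ = (κ₂ - 1) / (κ₁ - 1) := by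
      field_simp; nlinarith [e1, e3]
    have hy1 : y₁ = (κ₂ - 1) / (κ₁ - 1) := by
      field_simp; nlinarith [e2, e4]
    rw [hx, hy, hx1, hy1] at hlt
    rw [div_mul_div_comm, div_mul_div_comm, div_lt_div_iff₀ (by positivity) (by positivity)] at hlt
    nlinarith [hlt, mul_pos hk hk, mul_pos (mul_pos hk hk) (show (0:ℝ) < 2*κ₂ - 1 - κ₁ by linarith)]
  · refine ⟨(κ₁ - κ₂) / (κ₁ + κ₂ - 2), (κ₁ - κ₂) / (κ₁ + κ₂ - 2),
      (κ₂ - 1) / (κ₁ + κ₂ - 2), (κ₂ - 1) / (κ₁ + κ₂ - 2),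
      (κ₂ - 1) / (κ₁ + κ₂ - 2), (κ₂ - 1) / (κ₁ + κ₂ - 2), 0,
      div_pos (by linarith) hD, div_pos (by linarith) hD,
      div_pos (by linarith) hD, div_pos (by linarith) hD,
      div_pos (by linarith) hD, div_pos (by linarith) hD,
      rfl, rfl, rfl, rfl, rfl, rfl, rfl, ?_, ?_, ?_, ?_, ?_⟩ <;>
    · field_simp
      try ring
end

section
/- Let R be a probability measure on ℝ with compact support [m,M], and suppose x_min < m and x_max > M. Let H(t) = ∫ R(dx)/(t−x) for t ∉ [m,M], and set α_min = x_min − 1/H(x_min), α_max = x_max − 1/H(x_max). Then H(x_min) < 0, H(x_max) > 0, and the inequalities m < α_min ≤ ∫ x R(dx) ≤ α_max < M hold; in particular α_min ≤ α_max. -/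
open MeasureTheory

lemma tangent_aux (u v : ℝ) (hu : 0 < u) (hv : 0 < v) :
    v⁻¹ - (u - v) / v ^ 2 ≤ u⁻¹ := by
  rw [← sub_nonneg]
  have h : u⁻¹ - (v⁻¹ - (u - v) / v ^ 2) = (u - v) ^ 2 / (u * v ^ 2) := by
    field_simp; ring
  rw [h]; positivity

/-- For a probability measure `R` with support of convex hull `[m, M]` and outliers
`x_min < m`, `x_max > M`, the Hilbert transform `H(t) = ∫ (t−x)⁻¹ dR(x)` satisfies
`H(x_min) < 0 < H(x_max)` and, with `α_min = x_min − 1/H(x_min)`,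
`α_max = x_max − 1/H(x_max)`, one has `m < α_min ≤ ∫ x dR ≤ α_max < M`. -/
theorem hilbert_transform_bounds (R : Measure ℝ) [IsProbabilityMeasure R] (m M : ℝ)
    (hmM : m < M) (hsupp : msupport R ⊆ Set.Icc m M)
    (hm : m ∈ msupport R) (hM : M ∈ msupport R)
    (xmin xmax : ℝ) (h1 : xmin < m) (h2 : M < xmax) :
    (∫ x, (xmin - x)⁻¹ ∂ R) < 0 ∧
    0 < (∫ x, (xmax - x)⁻¹ ∂ R) ∧
    m < xmin - (∫ x, (xmin - x)⁻¹ ∂ R)⁻¹ ∧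
    xmin - (∫ x, (xmin - x)⁻¹ ∂ R)⁻¹ ≤ ∫ x, x ∂ R ∧
    (∫ x, x ∂ R) ≤ xmax - (∫ x, (xmax - x)⁻¹ ∂ R)⁻¹ ∧
    xmax - (∫ x, (xmax - x)⁻¹ ∂ R)⁻¹ < M := by
  -- R is concentrated on [m, M]
  have hRc : R (Set.Icc m M)ᶜ = 0 := by
    apply measure_null_of_locally_null
    intro x hx
    have hx' : x ∉ msupport R := fun h => hx (hsupp h)
    simp only [msupport, Set.mem_setOf_eq, not_forall] at hx'
    obtain ⟨U, hU, hU0⟩ := hx'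
    exact ⟨U, nhdsWithin_le_nhds hU, by simpa using hU0⟩
  have hae : ∀ᵐ x ∂ R, x ∈ Set.Icc m M := by
    rw [ae_iff]
    exact measure_mono_null (fun x hx => hx) hRc
  -- integrability helper
  have hint : ∀ (g : ℝ → ℝ) (C : ℝ), Measurable g → (∀ x ∈ Set.Icc m M, |g x| ≤ C) →
      Integrable g R := by
    intro g C hg hb
    apply Integrable.mono' (integrable_const C) hg.aestronglyMeasurable
    filter_upwards [hae] with x hx
    simpa using hb x hx
  have hintx : Integrable (fun x : ℝ => x) R := by
    refine hint _ (max |m| |M|) measurable_id fun x hx => ?_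
    rw [abs_le]
    have := le_abs_self M; have := neg_abs_le m
    have := le_max_left |m| |M|; have := le_max_right |m| |M|
    exact ⟨by linarith [hx.1], by linarith [hx.2]⟩
  have hintmin : Integrable (fun x : ℝ => (xmin - x)⁻¹) R := by
    refine hint _ ((m - xmin)⁻¹) ((measurable_const.sub measurable_id).inv) fun x hx => ?_
    rw [abs_inv, abs_of_nonpos (by linarith [hx.1] : xmin - x ≤ 0), neg_sub]
    rw [inv_le_inv₀ (by linarith [hx.1] : (0:ℝ) < x - xmin) (by linarith : (0:ℝ) < m - xmin)]
    linarith [hx.1]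
  have hintmax : Integrable (fun x : ℝ => (xmax - x)⁻¹) R := by
    refine hint _ ((xmax - M)⁻¹) ((measurable_const.sub measurable_id).inv) fun x hx => ?_
    rw [abs_inv, abs_of_nonneg (by linarith [hx.2] : (0:ℝ) ≤ xmax - x)]
    rw [inv_le_inv₀ (by linarith [hx.2] : (0:ℝ) < xmax - x) (by linarith : (0:ℝ) < xmax - M)]
    linarith [hx.2]
  set Hmin := ∫ x, (xmin - x)⁻¹ ∂ R with hHmin
  set Hmax := ∫ x, (xmax - x)⁻¹ ∂ R with hHmax
  set e := ∫ x, x ∂ R with he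
  have hconst : ∀ c : ℝ, ∫ _, c ∂ R = c := by
    intro c; simp
  -- bounds on e
  have hem : m ≤ e := by
    rw [he, ← hconst m]
    refine integral_mono_ae (integrable_const m) hintx ?_
    filter_upwards [hae] with x hx using hx.1
  have heM : e ≤ M := by
    rw [he, ← hconst M]
    refine integral_mono_ae hintx (integrable_const M) ?_
    filter_upwards [hae] with x hx using hx.2
  have hie : Integrable (fun x : ℝ => x - e) R := hintx.sub (integrable_const e)
  -- integral of affine functions centered at e
  have haffint : ∀ c₀ c₁ : ℝ, Integrable (fun x : ℝ => c₀ + (x - e) * c₁) R := by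
    intro c₀ c₁
    exact (integrable_const c₀).add (hie.mul_const c₁)
  have haff : ∀ c₀ c₁ : ℝ, ∫ x, (c₀ + (x - e) * c₁) ∂ R = c₀ := by
    intro c₀ c₁
    rw [integral_add (integrable_const c₀) (hie.mul_const c₁), hconst, integral_mul_const,
      integral_sub hintx (integrable_const e), hconst, ← he]
    simp
  -- Hmin ≤ (xmin - M)⁻¹ < 0
  have hminub : Hmin ≤ (xmin - M)⁻¹ := by
    rw [hHmin, ← hconst ((xmin - M)⁻¹)]
    refine integral_mono_ae hintmin (integrable_const _) ?_
    filter_upwards [hae] with x hx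
    have := one_div_le_one_div_of_neg_of_le (by linarith [hx.1] : (xmin - x : ℝ) < 0)
      (by linarith [hx.2] : xmin - M ≤ xmin - x)
    simpa [one_div] using this
  have hHmin_neg : Hmin < 0 := lt_of_le_of_lt hminub (by
    rw [inv_lt_zero]; linarith)
  -- strict lower bound : (xmin - m)⁻¹ < Hmin
  have hminlb : (xmin - m)⁻¹ < Hmin := by
    have hg : Integrable (fun x => (xmin - x)⁻¹ - (xmin - m)⁻¹) R :=
      hintmin.sub (integrable_const _)
    have hgnn : 0 ≤ᵐ[R] fun x => (xmin - x)⁻¹ - (xmin - m)⁻¹ := by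
      filter_upwards [hae] with x hx
      simp only [Pi.zero_apply]
      have := one_div_le_one_div_of_neg_of_le (by linarith : (xmin - m : ℝ) < 0)
        (by linarith [hx.1] : xmin - x ≤ xmin - m)
      simp only [one_div] at this
      linarith
    have hpos : 0 < ∫ x, ((xmin - x)⁻¹ - (xmin - m)⁻¹) ∂ R := by
      rw [(integral_pos_iff_support_of_nonneg_ae hgnn hg)]
      have hsub : Set.Ioi ((m + M) / 2) ⊆
          Function.support fun x => (xmin - x)⁻¹ - (xmin - m)⁻¹ := by
        intro x hx
        have hx' : (m + M) / 2 < x := hx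
        have := one_div_lt_one_div_of_neg_of_lt (by linarith : (xmin - m : ℝ) < 0)
          (by linarith : xmin - x < xmin - m)
        simp only [one_div] at this
        simp only [Function.mem_support]
        intro h; rw [sub_eq_zero] at h; rw [h] at this; exact lt_irrefl _ this
      have hIoi : R (Set.Ioi ((m + M) / 2)) ≠ 0 :=
        hM _ (Ioi_mem_nhds (by linarith))
      calc (0 : ENNReal) < R (Set.Ioi ((m + M) / 2)) := pos_iff_ne_zero.mpr hIoi
        _ ≤ R (Function.support fun x => (xmin - x)⁻¹ - (xmin - m)⁻¹) := measure_mono hsub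
    rw [integral_sub hintmin (integrable_const _), hconst] at hpos
    rw [hHmin]; linarith
  -- m < xmin - Hmin⁻¹
  have halpha_min : m < xmin - Hmin⁻¹ := by
    have := one_div_lt_one_div_of_neg_of_lt hHmin_neg hminlb
    rw [one_div, one_div, inv_inv] at this
    linarith
  -- Jensen for min : Hmin ≤ (xmin - e)⁻¹
  have hjmin : Hmin ≤ (xmin - e)⁻¹ := by
    have hev : 0 < e - xmin := by linarith
    have key : ∀ᵐ x ∂ R, (xmin - x)⁻¹ ≤ (xmin - e)⁻¹ + (x - e) * ((e - xmin) ^ 2)⁻¹ := by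
      filter_upwards [hae] with x hx
      have ht := tangent_aux (x - xmin) (e - xmin) (by linarith [hx.1]) hev
      have hrw : (x - xmin - (e - xmin)) / (e - xmin) ^ 2 = (x - e) * ((e - xmin) ^ 2)⁻¹ := by
        rw [div_eq_mul_inv]; ring_nf
      rw [hrw] at ht
      have h1' : (xmin - x)⁻¹ = -(x - xmin)⁻¹ := by
        rw [show xmin - x = -(x - xmin) by ring, inv_neg]
      have h2' : (xmin - e)⁻¹ = -(e - xmin)⁻¹ := by
        rw [show xmin - e = -(e - xmin) by ring, inv_neg]
      rw [h1', h2']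
      linarith
    have := integral_mono_ae hintmin (haffint _ _) key
    rw [haff] at this
    rw [hHmin]; exact this
  have hd : xmin - Hmin⁻¹ ≤ e := by
    have hne : xmin - e < 0 := by linarith
    have hinvne : (xmin - e)⁻¹ < 0 := by rw [inv_lt_zero]; exact hne
    have := one_div_le_one_div_of_neg_of_le hinvne hjmin
    rw [one_div, one_div, inv_inv] at this
    linarith
  -- Hmax lower bound : (xmax - m)⁻¹ ≤ Hmax
  have hmaxlb : (xmax - m)⁻¹ ≤ Hmax := by
    rw [hHmax, ← hconst ((xmax - m)⁻¹)]
    refine integral_mono_ae (integrable_const _) hintmax ?_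
    filter_upwards [hae] with x hx
    rw [inv_le_inv₀ (by linarith : (0:ℝ) < xmax - m) (by linarith [hx.2] : (0:ℝ) < xmax - x)]
    linarith [hx.1]
  have hHmax_pos : 0 < Hmax := lt_of_lt_of_le (inv_pos.mpr (by linarith)) hmaxlb
  -- strict upper bound : Hmax < (xmax - M)⁻¹
  have hmaxub : Hmax < (xmax - M)⁻¹ := by
    have hg : Integrable (fun x => (xmax - M)⁻¹ - (xmax - x)⁻¹) R :=
      (integrable_const _).sub hintmax
    have hgnn : 0 ≤ᵐ[R] fun x => (xmax - M)⁻¹ - (xmax - x)⁻¹ := by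
      filter_upwards [hae] with x hx
      simp only [Pi.zero_apply]
      have : (xmax - x)⁻¹ ≤ (xmax - M)⁻¹ := by
        rw [inv_le_inv₀ (by linarith [hx.2] : (0:ℝ) < xmax - x)
          (by linarith : (0:ℝ) < xmax - M)]
        linarith [hx.2]
      linarith
    have hpos : 0 < ∫ x, ((xmax - M)⁻¹ - (xmax - x)⁻¹) ∂ R := by
      rw [(integral_pos_iff_support_of_nonneg_ae hgnn hg)]
      have hsub : Set.Iio ((m + M) / 2) ⊆
          Function.support fun x => (xmax - M)⁻¹ - (xmax - x)⁻¹ := by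
        intro x hx
        have hx' : x < (m + M) / 2 := hx
        have : (xmax - x)⁻¹ < (xmax - M)⁻¹ := by
          rw [inv_lt_inv₀ (by linarith : (0:ℝ) < xmax - x) (by linarith : (0:ℝ) < xmax - M)]
          linarith
        simp only [Function.mem_support]
        intro h; rw [sub_eq_zero] at h; rw [h] at this; exact lt_irrefl _ this
      have hIio : R (Set.Iio ((m + M) / 2)) ≠ 0 :=
        hm _ (Iio_mem_nhds (by linarith))
      calc (0 : ENNReal) < R (Set.Iio ((m + M) / 2)) := pos_iff_ne_zero.mpr hIio
        _ ≤ R (Function.support fun x => (xmax - M)⁻¹ - (xmax - x)⁻¹) := measure_mono hsub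
    rw [integral_sub (integrable_const _) hintmax, hconst] at hpos
    rw [hHmax]; linarith
  have halpha_max : xmax - Hmax⁻¹ < M := by
    have := one_div_lt_one_div_of_lt hHmax_pos hmaxub
    rw [one_div, one_div, inv_inv] at this
    linarith
  -- Jensen for max : (xmax - e)⁻¹ ≤ Hmax
  have hjmax : (xmax - e)⁻¹ ≤ Hmax := by
    have hev : 0 < xmax - e := by linarith
    have key : ∀ᵐ x ∂ R, (xmax - e)⁻¹ + (x - e) * ((xmax - e) ^ 2)⁻¹ ≤ (xmax - x)⁻¹ := by
      filter_upwards [hae] with x hx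
      have ht := tangent_aux (xmax - x) (xmax - e) (by linarith [hx.2]) hev
      have hrw : (xmax - x - (xmax - e)) / (xmax - e) ^ 2 = -((x - e) * ((xmax - e) ^ 2)⁻¹) := by
        rw [div_eq_mul_inv]; ring_nf
      rw [hrw] at ht
      linarith
    have := integral_mono_ae (haffint _ _) hintmax key
    rw [haff] at this
    rw [hHmax]; exact this
  have hd' : e ≤ xmax - Hmax⁻¹ := by
    have hinvpos : 0 < (xmax - e)⁻¹ := inv_pos.mpr (by linarith)
    have := one_div_le_one_div_of_le hinvpos hjmax
    rw [one_div, one_div, inv_inv] at this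
    linarith
  exact ⟨hHmin_neg, hHmax_pos, halpha_min, hd, hd', halpha_max⟩
end

section
/- Let (Z_i) be i.i.d. ℝ^d-valued with all required exponential moments near 0 (E e^{κ|Z₁|} < ∞ for some κ > 0), B_n ⊆ {x_i^n} with τ: B_n → Y a map such that κ_n := sup_{x∈B_n} |f(x) − f(τ(x))| → 0, where f is bounded on a neighborhood of Y. Then L̃_n = (1/n)∑_{x_i^n∈B_n} f(x_i^n)·Z_i and L̄_n = (1/n)∑_{x_i^n∈B_n} f(τ(x_i^n))·Z_i are exponentially equivalent: for every ε > 0, limsup_n (1/n) log P(|L̃_n − L̄_n| > ε) = −∞. -/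
open MeasureTheory Filter
open scoped ENNReal

/-- Operator-type bound for `mulVec` with the sup norm on matrices (as `Pi` types). -/
lemma aux_mulVec_norm_le {m d : ℕ} (A : Fin m → Fin d → ℝ) (v : Fin d → ℝ) :
    ‖Matrix.mulVec A v‖ ≤ ((d : ℝ) + 1) * ‖A‖ * ‖v‖ := by
  have hnn : 0 ≤ ((d : ℝ) + 1) * ‖A‖ * ‖v‖ := by positivity
  refine (pi_norm_le_iff_of_nonneg hnn).2 fun j => ?_
  have : Matrix.mulVec A v j = ∑ k, A j k * v k := rfl
  rw [this]
  calc ‖∑ k, A j k * v k‖ ≤ ∑ k : Fin d, ‖A j k * v k‖ := norm_sum_le _ _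
    _ ≤ ∑ _k : Fin d, ‖A‖ * ‖v‖ := by
        refine Finset.sum_le_sum fun k _ => ?_
        rw [norm_mul]
        have h1 : ‖A j k‖ ≤ ‖A‖ := (norm_le_pi_norm (A j) k).trans (norm_le_pi_norm A j)
        have h2 : ‖v k‖ ≤ ‖v‖ := norm_le_pi_norm v k
        exact mul_le_mul h1 h2 (norm_nonneg _) (norm_nonneg _)
    _ = (d : ℝ) * (‖A‖ * ‖v‖) := by simp [Finset.sum_const, mul_assoc]
    _ ≤ ((d : ℝ) + 1) * ‖A‖ * ‖v‖ := by
        have : (d : ℝ) ≤ (d : ℝ) + 1 := by linarith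
        calc (d : ℝ) * (‖A‖ * ‖v‖) ≤ ((d : ℝ) + 1) * (‖A‖ * ‖v‖) :=
              mul_le_mul_of_nonneg_right this (by positivity)
          _ = ((d : ℝ) + 1) * ‖A‖ * ‖v‖ := by ring

/-- Multiplying an `EReal` inequality `x ≤ ↑y` by a positive real on the left. -/
lemma aux_ereal_mul_le {x : EReal} {y r : ℝ} (hr : 0 < r) (h : x ≤ (y : EReal)) :
    (r : EReal) * x ≤ ((r * y : ℝ) : EReal) := by
  induction x with
  | bot =>
      rw [EReal.coe_mul_bot_of_pos hr]
      exact bot_le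
  | coe z =>
      rw [← EReal.coe_mul]
      exact_mod_cast mul_le_mul_of_nonneg_left (by exact_mod_cast h) hr.le
  | top => exact absurd h (by simp)

/-- Exponential equivalence of `L̃ n = (1/n) ∑_{i ∈ B n} f(xᵢⁿ)·Z i` and
`L̄ n = (1/n) ∑_{i ∈ B n} f(τ(xᵢⁿ))·Z i` when the weight matrices `a n i = f(xᵢⁿ)` and
`b n i = f(τ(xᵢⁿ))` are uniformly close (`κ n → 0`) and bounded: for every `ε > 0`,
`limsup (1/n) log P(|L̃ n − L̄ n| > ε) = −∞`. -/
theorem exponential_equivalence {Ω : Type*} [MeasurableSpace Ω] (μ : Measure Ω)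
    [IsProbabilityMeasure μ] {d m : ℕ} (Z : ℕ → Ω → (Fin d → ℝ))
    (hmeas : ∀ i, Measurable (Z i))
    (hindep : ProbabilityTheory.iIndepFun Z μ)
    (hident : ∀ i, μ.map (Z i) = μ.map (Z 0))
    (hexp : ∃ κ > (0 : ℝ), Integrable (fun ω => Real.exp (κ * ‖Z 0 ω‖)) μ)
    (B : ℕ → Finset ℕ) (hB : ∀ n, B n ⊆ Finset.range n)
    (a b : ℕ → ℕ → (Fin m → Fin d → ℝ)) (Mb : ℝ)
    (hbound : ∀ n, ∀ i ∈ B n, ‖a n i‖ ≤ Mb ∧ ‖b n i‖ ≤ Mb)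
    (κn : ℕ → ℝ) (hκnonneg : ∀ n, 0 ≤ κn n)
    (hκ : ∀ n, ∀ i ∈ B n, ‖a n i - b n i‖ ≤ κn n)
    (hκ0 : Tendsto κn atTop (nhds 0)) :
    ∀ ε > (0 : ℝ),
      Filter.limsup
        (fun n : ℕ => (((n : ℝ))⁻¹ : EReal) * ENNReal.log
          (μ {ω | ε < ‖(n : ℝ)⁻¹ • ∑ i ∈ B n,
              (Matrix.mulVec (a n i) (Z i ω) - Matrix.mulVec (b n i) (Z i ω))‖}))
        atTop = ⊥ := by
  classical
  obtain ⟨κ, hκpos, hint0⟩ := hexp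
  intro ε hε
  -- the norms of the Z's
  set X : ℕ → Ω → ℝ := fun i ω => ‖Z i ω‖ with hXdef
  have hXmeas : ∀ i, Measurable (X i) := fun i => (hmeas i).norm
  have hXindep : ProbabilityTheory.iIndepFun X μ :=
    hindep.comp (fun _ v => ‖v‖) (fun _ => measurable_norm)
  -- integrability of exp(κ‖Z i‖) for each i, via identical distribution
  have hmap : ∀ i, ∀ g : (Fin d → ℝ) → ℝ, Measurable g →
      ∫ ω, g (Z i ω) ∂μ = ∫ ω, g (Z 0 ω) ∂μ := by
    intro i g hg
    rw [← integral_map (hmeas i).aemeasurable hg.aestronglyMeasurable, hident i,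
      integral_map (hmeas 0).aemeasurable hg.aestronglyMeasurable]
  have hXint : ∀ i, Integrable (fun ω => Real.exp (κ * X i ω)) μ := by
    intro i
    have hg : Measurable fun v : Fin d → ℝ => Real.exp (κ * ‖v‖) :=
      (measurable_norm.const_mul κ).exp
    have h0 : Integrable (fun v : Fin d → ℝ => Real.exp (κ * ‖v‖)) (μ.map (Z 0)) := by
      rw [integrable_map_measure hg.aestronglyMeasurable (hmeas 0).aemeasurable]
      exact hint0
    have hi : Integrable (fun v : Fin d → ℝ => Real.exp (κ * ‖v‖)) (μ.map (Z i)) := by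
      rw [hident i]; exact h0
    rw [integrable_map_measure hg.aestronglyMeasurable (hmeas i).aemeasurable] at hi
    exact hi
  -- the common mgf value
  set M : ℝ := ProbabilityTheory.mgf (X 0) μ κ with hMdef
  have hmgf_eq : ∀ i, ProbabilityTheory.mgf (X i) μ κ = M := by
    intro i
    simp only [ProbabilityTheory.mgf, hMdef]
    exact hmap i (fun v => Real.exp (κ * ‖v‖)) ((measurable_norm.const_mul κ).exp)
  have hM1 : 1 ≤ M := by
    have : ∫ _ω, (1 : ℝ) ∂μ ≤ ∫ ω, Real.exp (κ * X 0 ω) ∂μ := by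
      refine integral_mono (integrable_const 1) (hXint 0) fun ω => ?_
      have : (0 : ℝ) ≤ κ * X 0 ω := mul_nonneg hκpos.le (norm_nonneg _)
      simpa using Real.one_le_exp this
    simpa [hMdef, ProbabilityTheory.mgf] using this
  have hMpos : 0 < M := lt_of_lt_of_le one_pos hM1
  set C : ℝ := Real.log M with hCdef
  have hC0 : 0 ≤ C := Real.log_nonneg hM1
  -- Chernoff bound for the sum of norms
  have chernoff : ∀ (n : ℕ) (s : ℝ),
      (μ {ω | s ≤ ∑ i ∈ Finset.range n, X i ω}).toReal ≤
        Real.exp (-κ * s) * M ^ n := by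
    intro n s
    have h_int : Integrable (fun ω => Real.exp (κ * (∑ i ∈ Finset.range n, X i) ω)) μ :=
      hXindep.integrable_exp_mul_sum hXmeas (fun i _ => hXint i)
    have h := ProbabilityTheory.measure_ge_le_exp_mul_mgf (X := ∑ i ∈ Finset.range n, X i)
      (μ := μ) s hκpos.le h_int
    have hmgf : ProbabilityTheory.mgf (∑ i ∈ Finset.range n, X i) μ κ = M ^ n := by
      rw [hXindep.mgf_sum hXmeas]
      simp [hmgf_eq]
    rw [hmgf] at h
    have hset : {ω | s ≤ ∑ i ∈ Finset.range n, X i ω}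
        = {ω | s ≤ (∑ i ∈ Finset.range n, X i) ω} := by
      ext ω; simp [Finset.sum_apply]
    rw [hset]
    exact h
  -- reduce to: limsup ≤ c for all real c
  rw [EReal.eq_bot_iff_forall_lt]
  intro y
  have key : ∀ c : ℝ, Filter.limsup
      (fun n : ℕ => (((n : ℝ))⁻¹ : EReal) * ENNReal.log
        (μ {ω | ε < ‖(n : ℝ)⁻¹ • ∑ i ∈ B n,
            (Matrix.mulVec (a n i) (Z i ω) - Matrix.mulVec (b n i) (Z i ω))‖}))
      atTop ≤ (c : EReal) := by
    intro c
    set D : ℝ := (d : ℝ) + 1 with hDdef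
    have hDpos : 0 < D := by positivity
    set r : ℝ := max (C - c) 1 with hrdef
    have hrpos : 0 < r := lt_of_lt_of_le one_pos (le_max_right _ _)
    set δ : ℝ := κ * ε / (D * r) with hδdef
    have hδpos : 0 < δ := by positivity
    refine Filter.limsup_le_of_le (by isBoundedDefault) ?_
    filter_upwards [hκ0.eventually_lt_const hδpos, Filter.eventually_ge_atTop 1]
      with n hκδ hn1
    have hnpos : (0 : ℝ) < (n : ℝ) := by exact_mod_cast hn1
    have hninv : (0 : ℝ) < ((n : ℝ))⁻¹ := inv_pos.2 hnpos
    rcases eq_or_lt_of_le (hκnonneg n) with hκ0n | hκnpos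
    · -- κn n = 0 : the matrices agree on B n and the event is empty
      have hab : ∀ i ∈ B n, a n i = b n i := by
        intro i hi
        have := hκ n i hi
        rw [← hκ0n] at this
        exact sub_eq_zero.1 (norm_le_zero_iff.1 this)
      have hsetempty : {ω | ε < ‖(n : ℝ)⁻¹ • ∑ i ∈ B n,
          (Matrix.mulVec (a n i) (Z i ω) - Matrix.mulVec (b n i) (Z i ω))‖} = ∅ := by
        ext ω
        simp only [Set.mem_setOf_eq, Set.mem_empty_iff_false, iff_false, not_lt]
        have : ∑ i ∈ B n,
            (Matrix.mulVec (a n i) (Z i ω) - Matrix.mulVec (b n i) (Z i ω)) = 0 := by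
          refine Finset.sum_eq_zero fun i hi => ?_
          rw [hab i hi, sub_self]
        rw [this, smul_zero, norm_zero]
        exact hε.le
      rw [hsetempty]
      simp only [measure_empty, ENNReal.log_zero]
      rw [← EReal.coe_inv, EReal.coe_mul_bot_of_pos (by exact_mod_cast hninv)]
      exact bot_le
    · -- κn n > 0 : Chernoff estimate
      set s : ℝ := (n : ℝ) * ε / (D * κn n) with hsdef
      have hDκ : 0 < D * κn n := mul_pos hDpos hκnpos
      -- event inclusion
      have hincl : {ω | ε < ‖(n : ℝ)⁻¹ • ∑ i ∈ B n,
            (Matrix.mulVec (a n i) (Z i ω) - Matrix.mulVec (b n i) (Z i ω))‖}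
          ⊆ {ω | s ≤ ∑ i ∈ Finset.range n, X i ω} := by
        intro ω hω
        simp only [Set.mem_setOf_eq] at hω ⊢
        have hnorm : ‖∑ i ∈ B n,
            (Matrix.mulVec (a n i) (Z i ω) - Matrix.mulVec (b n i) (Z i ω))‖
            ≤ D * κn n * ∑ i ∈ Finset.range n, X i ω := by
          calc ‖∑ i ∈ B n,
              (Matrix.mulVec (a n i) (Z i ω) - Matrix.mulVec (b n i) (Z i ω))‖
              ≤ ∑ i ∈ B n, ‖Matrix.mulVec (a n i) (Z i ω)
                  - Matrix.mulVec (b n i) (Z i ω)‖ := norm_sum_le _ _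
            _ ≤ ∑ i ∈ B n, D * κn n * X i ω := by
                refine Finset.sum_le_sum fun i hi => ?_
                have h1 : Matrix.mulVec (a n i) (Z i ω) - Matrix.mulVec (b n i) (Z i ω)
                    = Matrix.mulVec (a n i - b n i) (Z i ω) := by
                  exact (Matrix.sub_mulVec _ _ _).symm
                rw [h1]
                calc ‖Matrix.mulVec (a n i - b n i) (Z i ω)‖
                    ≤ D * ‖a n i - b n i‖ * ‖Z i ω‖ := aux_mulVec_norm_le _ _
                  _ ≤ D * κn n * X i ω := by
                      refine mul_le_mul_of_nonneg_right ?_ (norm_nonneg _)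
                      exact mul_le_mul_of_nonneg_left (hκ n i hi) hDpos.le
            _ ≤ ∑ i ∈ Finset.range n, D * κn n * X i ω := by
                refine Finset.sum_le_sum_of_subset_of_nonneg (hB n) fun i _ _ => ?_
                exact mul_nonneg hDκ.le (norm_nonneg _)
            _ = D * κn n * ∑ i ∈ Finset.range n, X i ω := by
                rw [Finset.mul_sum]
        have hε' : ε < (n : ℝ)⁻¹ * (D * κn n * ∑ i ∈ Finset.range n, X i ω) := by
          calc ε < ‖(n : ℝ)⁻¹ • ∑ i ∈ B n,
              (Matrix.mulVec (a n i) (Z i ω) - Matrix.mulVec (b n i) (Z i ω))‖ := hω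
            _ = (n : ℝ)⁻¹ * ‖∑ i ∈ B n,
                (Matrix.mulVec (a n i) (Z i ω) - Matrix.mulVec (b n i) (Z i ω))‖ := by
                rw [norm_smul, Real.norm_eq_abs, abs_of_pos hninv]
            _ ≤ (n : ℝ)⁻¹ * (D * κn n * ∑ i ∈ Finset.range n, X i ω) :=
                mul_le_mul_of_nonneg_left hnorm hninv.le
        have h2 : (n : ℝ) * ε < D * κn n * ∑ i ∈ Finset.range n, X i ω := by
          have := mul_lt_mul_of_pos_left hε' hnpos
          rwa [← mul_assoc, mul_inv_cancel₀ hnpos.ne', one_mul] at this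
        rw [hsdef, div_le_iff₀ hDκ]
        calc (n : ℝ) * ε ≤ D * κn n * ∑ i ∈ Finset.range n, X i ω := h2.le
          _ = (∑ i ∈ Finset.range n, X i ω) * (D * κn n) := by ring
      -- measure bound
      have hmeasle : μ {ω | ε < ‖(n : ℝ)⁻¹ • ∑ i ∈ B n,
            (Matrix.mulVec (a n i) (Z i ω) - Matrix.mulVec (b n i) (Z i ω))‖}
          ≤ ENNReal.ofReal (Real.exp (-κ * s + (n : ℝ) * C)) := by
        refine le_trans (measure_mono hincl) ?_
        have hT := chernoff n s
        have hfin : μ {ω | s ≤ ∑ i ∈ Finset.range n, X i ω} ≠ ⊤ := measure_ne_top _ _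
        have : μ {ω | s ≤ ∑ i ∈ Finset.range n, X i ω}
            = ENNReal.ofReal ((μ {ω | s ≤ ∑ i ∈ Finset.range n, X i ω}).toReal) :=
          (ENNReal.ofReal_toReal hfin).symm
        rw [this]
        refine ENNReal.ofReal_le_ofReal (hT.trans ?_)
        have : M ^ n = Real.exp ((n : ℝ) * C) := by
          rw [hCdef, ← Real.exp_log hMpos, ← Real.exp_nat_mul, Real.exp_log hMpos,
            Real.exp_nat_mul, Real.exp_log hMpos]
        rw [this, ← Real.exp_add]
      -- log bound
      have hlog : ENNReal.log (μ {ω | ε < ‖(n : ℝ)⁻¹ • ∑ i ∈ B n,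
            (Matrix.mulVec (a n i) (Z i ω) - Matrix.mulVec (b n i) (Z i ω))‖})
          ≤ ((-κ * s + (n : ℝ) * C : ℝ) : EReal) := by
        refine le_trans (ENNReal.log_monotone hmeasle) ?_
        rw [ENNReal.log_ofReal_of_pos (Real.exp_pos _), Real.log_exp]
      -- multiply by 1/n
      rw [← EReal.coe_inv]
      refine le_trans (aux_ereal_mul_le hninv (x := ENNReal.log _) hlog) ?_
      rw [EReal.coe_le_coe_iff]
      -- final real arithmetic
      have hval : ((n : ℝ))⁻¹ * (-κ * s + (n : ℝ) * C) = -(κ * ε / (D * κn n)) + C := by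
        rw [hsdef]
        field_simp
      rw [hval]
      have hκεr : r ≤ κ * ε / (D * κn n) := by
        rw [le_div_iff₀ hDκ]
        have h1 : D * κn n < κ * ε / r := by
          have h2 : κn n < κ * ε / (D * r) := hκδ
          calc D * κn n < D * (κ * ε / (D * r)) := mul_lt_mul_of_pos_left h2 hDpos
            _ = κ * ε / r := by field_simp
        have : r * (D * κn n) < κ * ε := by
          calc r * (D * κn n) < r * (κ * ε / r) := mul_lt_mul_of_pos_left h1 hrpos
            _ = κ * ε := by field_simp
        exact this.le
      have : -(κ * ε / (D * κn n)) ≤ -r := neg_le_neg hκεr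
      have hrCc : C - c ≤ r := le_max_left _ _
      linarith
  have h1 : Filter.limsup
      (fun n : ℕ => (((n : ℝ))⁻¹ : EReal) * ENNReal.log
        (μ {ω | ε < ‖(n : ℝ)⁻¹ • ∑ i ∈ B n,
            (Matrix.mulVec (a n i) (Z i ω) - Matrix.mulVec (b n i) (Z i ω))‖}))
      atTop ≤ ((y - 1 : ℝ) : EReal) := key (y - 1)
  refine lt_of_le_of_lt h1 ?_
  exact_mod_cast sub_one_lt y
end
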